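/- arXiv:0904.1253 — 8 statements merged into one kernel-verified Lean document; each statement's English description precedes it below -/
import Mathlib

section
/- Let d ≥ 2, let X and A₁, …, A_{d-1} be finite sets, and for each 1 ≤ i ≤ d−1 let g_i : X → A_i be a function. Then (∏_{i=1}^{d-1} |A_i|) · |{(x₁,…,x_d) ∈ X^d : g_i(x_i) = g_i(x_{i+1}) for all 1 ≤ i ≤ d−1}| ≥ |X|^d. -/
open Finset

/-- number of elements of the fiber of `g` over `a` -/
def fibcard {X A : Type*} [Fintype X] [DecidableEq A] (g : X → A) (a : A) : ℕ :=
  (Finset.univ.filter fun y => g y = a).card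

lemma fibcard_pos {X A : Type*} [Fintype X] [DecidableEq A] (g : X → A) (x : X) :
    1 ≤ fibcard g (g x) := by
  rw [fibcard, Nat.one_le_iff_ne_zero, ← Nat.pos_iff_ne_zero, Finset.card_pos]
  exact ⟨x, by simp⟩

lemma fibcard_real_pos {X A : Type*} [Fintype X] [DecidableEq A] (g : X → A) (x : X) :
    (0:ℝ) < (fibcard g (g x) : ℝ) := by
  exact_mod_cast fibcard_pos g x

/-- summing the indicator of a fiber -/
lemma sum_fiber_ind {X A : Type*} [Fintype X] [DecidableEq A] (g : X → A) (b : A) :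
    ∑ z : X, (if g z = b then (1:ℝ) else 0) = (fibcard g b : ℝ) := by
  rw [fibcard]
  simp [Finset.sum_boole]

/-- collapse lemma : averaging over fibers preserves total sum -/
lemma collapse {X A : Type*} [Fintype X] [Fintype A] [DecidableEq A] (g : X → A) (θ : X → ℝ) :
    ∑ w : X, (fibcard g (g w) : ℝ)⁻¹ *
      (∑ z ∈ Finset.univ.filter fun z => g z = g w, θ z) = ∑ z : X, θ z := by
  have h1 : ∀ a : A, ∑ w ∈ Finset.univ.filter fun w => g w = a,
      ((fibcard g (g w) : ℝ)⁻¹ * ∑ z ∈ Finset.univ.filter fun z => g z = g w, θ z)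
      = ∑ z ∈ Finset.univ.filter fun z => g z = a, θ z := by
    intro a
    have h2 : ∀ w ∈ Finset.univ.filter fun w => g w = a,
        ((fibcard g (g w) : ℝ)⁻¹ * ∑ z ∈ Finset.univ.filter fun z => g z = g w, θ z)
        = (fibcard g a : ℝ)⁻¹ * ∑ z ∈ Finset.univ.filter fun z => g z = a, θ z := by
      intro w hw
      rw [Finset.mem_filter] at hw
      rw [hw.2]
    rw [Finset.sum_congr rfl h2, Finset.sum_const]
    rcases Nat.eq_zero_or_pos (fibcard g a) with h | h
    · have : (Finset.univ.filter fun z => g z = a) = ∅ := by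
        rw [← Finset.card_eq_zero]; exact h
      simp [this]
    · have hcard : (Finset.univ.filter fun w => g w = a).card = fibcard g a := rfl
      rw [hcard, nsmul_eq_mul, ← mul_assoc, mul_inv_cancel₀ (by positivity), one_mul]
  calc ∑ w : X, (fibcard g (g w) : ℝ)⁻¹ *
        (∑ z ∈ Finset.univ.filter fun z => g z = g w, θ z)
      = ∑ a : A, ∑ w ∈ Finset.univ.filter fun w => g w = a,
          ((fibcard g (g w) : ℝ)⁻¹ * ∑ z ∈ Finset.univ.filter fun z => g z = g w, θ z) := by
        rw [Finset.sum_fiberwise]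
    _ = ∑ a : A, ∑ z ∈ Finset.univ.filter fun z => g z = a, θ z := by
        exact Finset.sum_congr rfl fun a _ => h1 a
    _ = ∑ z : X, θ z := by rw [Finset.sum_fiberwise]

lemma sum_inv_fib_le {X A : Type*} [Fintype X] [Fintype A] [DecidableEq A] (g : X → A) :
    ∑ w : X, (fibcard g (g w) : ℝ)⁻¹ ≤ (Fintype.card A : ℝ) := by
  calc ∑ w : X, (fibcard g (g w) : ℝ)⁻¹
      = ∑ a : A, ∑ w ∈ Finset.univ.filter fun w => g w = a, (fibcard g (g w) : ℝ)⁻¹ := by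
        rw [Finset.sum_fiberwise]
    _ ≤ ∑ a : A, 1 := by
        apply Finset.sum_le_sum
        intro a _
        have h2 : ∀ w ∈ Finset.univ.filter fun w => g w = a,
            ((fibcard g (g w) : ℝ)⁻¹) = (fibcard g a : ℝ)⁻¹ := by
          intro w hw; rw [Finset.mem_filter] at hw; rw [hw.2]
        rw [Finset.sum_congr rfl h2, Finset.sum_const, nsmul_eq_mul]
        rcases Nat.eq_zero_or_pos (fibcard g a) with h | h
        · have hcard : (Finset.univ.filter fun w => g w = a).card = fibcard g a := rfl
          rw [hcard, h]; simp
        · have hcard : (Finset.univ.filter fun w => g w = a).card = fibcard g a := rfl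
          rw [hcard, mul_inv_cancel₀ (by positivity)]
    _ = (Fintype.card A : ℝ) := by simp


/-- chain indicator -/
noncomputable def cind {k : ℕ} {X : Type*} {A : Fin k → Type*} [∀ i, DecidableEq (A i)]
    (g : ∀ i, X → A i) (x : Fin (k+1) → X) : ℝ :=
  if ∀ j : Fin k, g j (x j.castSucc) = g j (x j.succ) then 1 else 0

/-- Markov weight -/
noncomputable def cwgt {k : ℕ} {X : Type*} [Fintype X] {A : Fin k → Type*} [∀ i, DecidableEq (A i)]
    (g : ∀ i, X → A i) (x : Fin (k+1) → X) : ℝ :=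
  ∏ j : Fin k, (fibcard (g j) (g j (x j.castSucc)) : ℝ)⁻¹

lemma cind_nonneg {k : ℕ} {X : Type*} {A : Fin k → Type*} [∀ i, DecidableEq (A i)]
    (g : ∀ i, X → A i) (x : Fin (k+1) → X) : 0 ≤ cind g x := by
  unfold cind; split <;> norm_num

lemma cwgt_nonneg {k : ℕ} {X : Type*} [Fintype X] {A : Fin k → Type*} [∀ i, DecidableEq (A i)]
    (g : ∀ i, X → A i) (x : Fin (k+1) → X) : 0 ≤ cwgt g x :=
  Finset.prod_nonneg fun j _ => by positivity

lemma key : ∀ (k : ℕ) {X : Type*} [Fintype X] {A : Fin k → Type*} [∀ i, Fintype (A i)]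
    [∀ i, DecidableEq (A i)] (g : ∀ i, X → A i) (i : Fin (k+1)) (θ : X → ℝ),
    ∑ x : Fin (k+1) → X, cind g x * cwgt g x * θ (x i) = ∑ y : X, θ y := by
  intro k
  induction k with
  | zero =>
    intro X _ A _ _ g i θ
    have hi : i = 0 := Fin.fin_one_eq_zero i
    subst hi
    have h1 : ∀ x : Fin 1 → X, cind g x * cwgt g x * θ (x 0) = θ (x 0) := by
      intro x
      have : cind g x = 1 := by unfold cind; simp
      have h2 : cwgt g x = 1 := by unfold cwgt; simp
      rw [this, h2, one_mul, one_mul]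
    rw [Finset.sum_congr rfl fun x _ => h1 x]
    exact Fintype.sum_equiv (Equiv.funUnique (Fin 1) X) _ _ (fun x => rfl)
  | succ k IH =>
    intro X _ A _ _ g i θ
    -- decompose functions as cons
    have hsum : ∀ f : (Fin (k+2) → X) → ℝ,
        ∑ x : Fin (k+2) → X, f x = ∑ y : Fin (k+1) → X, ∑ z : X, f (Fin.cons z y) := by
      intro f
      rw [← Equiv.sum_comp (Fin.consEquiv (fun _ : Fin (k+2) => X)) f]
      rw [Fintype.sum_prod_type]
      rw [Finset.sum_comm]
      rfl
    set g' : ∀ j : Fin k, X → A j.succ := fun j => g j.succ with hg'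
    have hcons_ind : ∀ (z : X) (y : Fin (k+1) → X),
        cind g (Fin.cons z y) = (if g 0 z = g 0 (y 0) then (1:ℝ) else 0) * cind g' y := by
      intro z y
      have e0 : (Fin.cons z y : Fin (k+2) → X) (Fin.castSucc 0) = z := by simp
      have e1 : (Fin.cons z y : Fin (k+2) → X) (Fin.succ 0) = y 0 := by simp
      have e2 : ∀ j : Fin k, (Fin.cons z y : Fin (k+2) → X) (Fin.castSucc (Fin.succ j))
          = y j.castSucc := by
        intro j; rw [← Fin.succ_castSucc]; simp
      have e3 : ∀ j : Fin k, (Fin.cons z y : Fin (k+2) → X) (Fin.succ (Fin.succ j))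
          = y j.succ := by intro j; simp
      have hiff : (∀ j : Fin (k+1),
            g j ((Fin.cons z y : Fin (k+2) → X) j.castSucc)
              = g j ((Fin.cons z y : Fin (k+2) → X) j.succ))
          ↔ ((g 0 z = g 0 (y 0)) ∧ ∀ j : Fin k, g' j (y j.castSucc) = g' j (y j.succ)) := by
        constructor
        · intro h
          refine ⟨by have h0 := h 0; rwa [e0, e1] at h0, fun j => ?_⟩
          have hj := h j.succ
          rwa [e2 j, e3 j] at hj
        · rintro ⟨h0, hs⟩ j
          induction j using Fin.cases with
          | zero => rw [e0, e1]; exact h0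
          | succ j₀ => rw [e2 j₀, e3 j₀]; exact hs j₀
      rw [cind, cind, if_congr hiff rfl rfl]
      by_cases h1 : g 0 z = g 0 (y 0) <;>
        by_cases h2 : ∀ j : Fin k, g' j (y j.castSucc) = g' j (y j.succ) <;>
        simp [h1, h2]
    have hcons_wgt : ∀ (z : X) (y : Fin (k+1) → X),
        cwgt g (Fin.cons z y) = (fibcard (g 0) (g 0 z) : ℝ)⁻¹ * cwgt g' y := by
      intro z y
      have e2 : ∀ j : Fin k, (Fin.cons z y : Fin (k+2) → X) (Fin.castSucc (Fin.succ j))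
          = y j.castSucc := fun j => by rw [← Fin.succ_castSucc]; simp
      rw [cwgt, cwgt, Fin.prod_univ_succ]
      simp only [Fin.castSucc_zero, Fin.cons_zero, e2]
      rfl
    induction i using Fin.cases with
    | zero =>
      -- θ sits at the first coordinate
      rw [hsum]
      have hy : ∀ y : Fin (k+1) → X,
          ∑ z : X, cind g (Fin.cons z y) * cwgt g (Fin.cons z y)
              * θ ((Fin.cons z y : Fin (k+2) → X) 0)
          = cind g' y * cwgt g' y *
            ((fibcard (g 0) (g 0 (y 0)) : ℝ)⁻¹ *
              ∑ z ∈ Finset.univ.filter fun z => g 0 z = g 0 (y 0), θ z) := by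
        intro y
        have h1 : ∀ z : X,
            cind g (Fin.cons z y) * cwgt g (Fin.cons z y)
                * θ ((Fin.cons z y : Fin (k+2) → X) 0)
            = cind g' y * cwgt g' y *
              ((if g 0 z = g 0 (y 0) then (1:ℝ) else 0) * (fibcard (g 0) (g 0 z) : ℝ)⁻¹ * θ z) := by
          intro z
          rw [hcons_ind, hcons_wgt]
          have hz0 : (Fin.cons z y : Fin (k+2) → X) 0 = z := by simp
          rw [hz0]; ring
        rw [Finset.sum_congr rfl fun z _ => h1 z, ← Finset.mul_sum]
        congr 1
        have h2 : ∀ z : X,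
            (if g 0 z = g 0 (y 0) then (1:ℝ) else 0) * (fibcard (g 0) (g 0 z) : ℝ)⁻¹ * θ z
            = if g 0 z = g 0 (y 0) then (fibcard (g 0) (g 0 (y 0)) : ℝ)⁻¹ * θ z else 0 := by
          intro z
          by_cases h : g 0 z = g 0 (y 0)
          · rw [if_pos h, if_pos h, h]; ring
          · rw [if_neg h, if_neg h]; ring
        rw [Finset.sum_congr rfl fun z _ => h2 z, Finset.sum_ite, Finset.sum_const_zero,
          add_zero, ← Finset.mul_sum]
      rw [Finset.sum_congr rfl fun y _ => hy y]
      have hIH := IH g' 0 (fun w => (fibcard (g 0) (g 0 w) : ℝ)⁻¹ *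
        ∑ z ∈ Finset.univ.filter fun z => g 0 z = g 0 w, θ z)
      rw [hIH]
      exact collapse (g 0) θ
    | succ i₀ =>
      rw [hsum]
      have hy : ∀ y : Fin (k+1) → X,
          ∑ z : X, cind g (Fin.cons z y) * cwgt g (Fin.cons z y)
              * θ ((Fin.cons z y : Fin (k+2) → X) i₀.succ)
          = cind g' y * cwgt g' y * θ (y i₀) := by
        intro y
        have h1 : ∀ z : X,
            cind g (Fin.cons z y) * cwgt g (Fin.cons z y)
                * θ ((Fin.cons z y : Fin (k+2) → X) i₀.succ)
            = (cind g' y * cwgt g' y * θ (y i₀)) *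
              ((if g 0 z = g 0 (y 0) then (1:ℝ) else 0) * (fibcard (g 0) (g 0 z) : ℝ)⁻¹) := by
          intro z
          rw [hcons_ind, hcons_wgt]
          have hzc : (Fin.cons z y : Fin (k+2) → X) i₀.succ = y i₀ := by simp
          rw [hzc]; ring
        rw [Finset.sum_congr rfl fun z _ => h1 z, ← Finset.mul_sum]
        have h2 : ∀ z : X,
            (if g 0 z = g 0 (y 0) then (1:ℝ) else 0) * (fibcard (g 0) (g 0 z) : ℝ)⁻¹
            = if g 0 z = g 0 (y 0) then (fibcard (g 0) (g 0 (y 0)) : ℝ)⁻¹ else 0 := by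
          intro z
          by_cases h : g 0 z = g 0 (y 0)
          · rw [if_pos h, if_pos h, h, one_mul]
          · rw [if_neg h, if_neg h, zero_mul]
        rw [Finset.sum_congr rfl fun z _ => h2 z, Finset.sum_ite, Finset.sum_const_zero,
          add_zero, Finset.sum_const, nsmul_eq_mul]
        have hfib : ((Finset.univ.filter fun z => g 0 z = g 0 (y 0)).card : ℝ)
            = (fibcard (g 0) (g 0 (y 0)) : ℝ) := by rw [fibcard]
        rw [hfib, mul_inv_cancel₀ (fibcard_real_pos (g 0) (y 0)).ne', mul_one]
      rw [Finset.sum_congr rfl fun y _ => hy y]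
      exact IH g' i₀ θ

/-- Katz–Tao chain lemma: for `d = k + 1 ≥ 2`, finite sets `X`, `A₁, …, A_k` and
functions `gᵢ : X → Aᵢ`, the number of chains `(x₁,…,x_d) ∈ X^d` with
`gᵢ(xᵢ) = gᵢ(x_{i+1})` for all `i` satisfies
`(∏ᵢ |Aᵢ|) · #chains ≥ |X|^d`. -/
theorem katz_tao_chains {k : ℕ} (hk : 1 ≤ k) {X : Type*} [Fintype X]
    (A : Fin k → Type*) [∀ i, Fintype (A i)] (g : ∀ i, X → A i) :
    Nat.card X ^ (k + 1) ≤
      (∏ i, Nat.card (A i)) *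
        Nat.card {x : Fin (k + 1) → X // ∀ i : Fin k, g i (x i.castSucc) = g i (x i.succ)} := by
  classical
  rcases isEmpty_or_nonempty X with hX | hX
  · have h0 : Nat.card X = 0 := by simp [Nat.card_eq_fintype_card]
    rw [h0, Nat.zero_pow (by omega)]
    exact Nat.zero_le _
  set T : ℝ := (Fintype.card X : ℝ) with hT
  have hT0 : (0:ℝ) < T := by
    rw [hT]; exact_mod_cast Fintype.card_pos
  set μ : (Fin (k+1) → X) → ℝ := fun x => cind g x * cwgt g x / T with hμ
  have hμ0 : ∀ x, 0 ≤ μ x := fun x =>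
    div_nonneg (mul_nonneg (cind_nonneg g x) (cwgt_nonneg g x)) hT0.le
  have hsum1 : ∑ x : Fin (k+1) → X, cind g x * cwgt g x = T := by
    have h := key k g 0 (fun _ => (1:ℝ))
    simpa [hT] using h
  have hμ1 : ∑ x : Fin (k+1) → X, μ x = 1 := by
    rw [hμ, ← Finset.sum_div, hsum1, div_self hT0.ne']
  set n : Fin k → (Fin (k+1) → X) → ℝ :=
    fun j x => (fibcard (g j) (g j (x j.castSucc)) : ℝ) with hn
  have hnm : ∀ (x : Fin (k+1) → X) (j : Fin k), (0:ℝ) < n j x :=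
    fun x j => fibcard_real_pos (g j) _
  set z : (Fin (k+1) → X) → ℝ := fun x => T * ∏ j : Fin k, n j x with hz
  have hz0 : ∀ x, 0 ≤ z x := fun x =>
    mul_nonneg hT0.le (Finset.prod_nonneg fun j _ => (hnm x j).le)
  have hμz : ∀ x, μ x * z x = cind g x := by
    intro x
    have h1 : (∏ j : Fin k, (n j x)⁻¹) * (∏ j : Fin k, n j x) = 1 := by
      rw [← Finset.prod_mul_distrib]
      exact Finset.prod_eq_one fun j _ => inv_mul_cancel₀ (hnm x j).ne'
    have h2 : cwgt g x = ∏ j : Fin k, (n j x)⁻¹ := rfl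
    have h3 : μ x * z x = cind g x * (cwgt g x * ∏ j : Fin k, n j x) * (T / T) := by
      simp only [hμ, hz]; ring
    rw [h3, h2, h1, div_self hT0.ne', mul_one, mul_one]
  set N : ℝ := ∑ x : Fin (k+1) → X, cind g x with hN
  have hNval : ∑ x : Fin (k+1) → X, μ x * z x = N := by
    rw [hN]; exact Finset.sum_congr rfl fun x _ => hμz x
  have amgm := Real.geom_mean_le_arith_mean_weighted Finset.univ μ z
    (fun x _ => hμ0 x) hμ1 (fun x _ => hz0 x)
  have hTpow : ∏ x : Fin (k+1) → X, T ^ μ x = T := by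
    rw [← Real.rpow_sum_of_pos hT0, hμ1, Real.rpow_one]
  have hsplit : ∏ x : Fin (k+1) → X, z x ^ μ x
      = (∏ x : Fin (k+1) → X, T ^ μ x) *
        ∏ j : Fin k, ∏ x : Fin (k+1) → X, (n j x) ^ μ x := by
    have h1 : ∀ x : Fin (k+1) → X, z x ^ μ x = T ^ μ x * ∏ j : Fin k, (n j x) ^ μ x := by
      intro x
      rw [hz]
      rw [Real.mul_rpow hT0.le (Finset.prod_nonneg fun j _ => (hnm x j).le)]
      rw [Real.finset_prod_rpow Finset.univ _ (fun j _ => (hnm x j).le)]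
    rw [Finset.prod_congr rfl fun x _ => h1 x, Finset.prod_mul_distrib]
    congr 1
    exact Finset.prod_comm
  have hAj : ∀ j : Fin k, (0:ℝ) < (Fintype.card (A j) : ℝ) := by
    intro j
    have : Nonempty (A j) := ⟨g j (Classical.arbitrary X)⟩
    exact_mod_cast Fintype.card_pos
  have hQ : ∀ j : Fin k,
      T / (Fintype.card (A j) : ℝ) ≤ ∏ x : Fin (k+1) → X, (n j x) ^ μ x := by
    intro j
    have amgm2 := Real.geom_mean_le_arith_mean_weighted Finset.univ μ
      (fun x => (n j x)⁻¹) (fun x _ => hμ0 x) hμ1 (fun x _ => by positivity)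
    have hkey : ∑ x : Fin (k+1) → X, μ x * (n j x)⁻¹ ≤ (Fintype.card (A j) : ℝ) / T := by
      have h1 : ∑ x : Fin (k+1) → X, μ x * (n j x)⁻¹
          = (∑ x : Fin (k+1) → X, cind g x * cwgt g x *
              (fun w => (fibcard (g j) (g j w) : ℝ)⁻¹) (x j.castSucc)) / T := by
        rw [Finset.sum_div]
        apply Finset.sum_congr rfl
        intro x _
        rw [hμ, hn]
        ring
      rw [h1, key k g j.castSucc (fun w => (fibcard (g j) (g j w) : ℝ)⁻¹)]
      exact (div_le_div_iff_of_pos_right hT0).mpr (sum_inv_fib_le (g j))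
    have hP : 0 < ∏ x : Fin (k+1) → X, (n j x) ^ μ x :=
      Finset.prod_pos fun x _ => Real.rpow_pos_of_pos (hnm x j) _
    have hLHS : ∏ x : Fin (k+1) → X, ((n j x)⁻¹) ^ μ x
        = (∏ x : Fin (k+1) → X, (n j x) ^ μ x)⁻¹ := by
      rw [← Finset.prod_inv_distrib]
      exact Finset.prod_congr rfl fun x _ => Real.inv_rpow (hnm x j).le _
    rw [hLHS] at amgm2
    calc T / (Fintype.card (A j) : ℝ) = ((Fintype.card (A j) : ℝ) / T)⁻¹ := by rw [inv_div]
      _ ≤ ((∏ x : Fin (k+1) → X, (n j x) ^ μ x)⁻¹)⁻¹ :=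
          inv_anti₀ (inv_pos.mpr hP) (le_trans amgm2 hkey)
      _ = ∏ x : Fin (k+1) → X, (n j x) ^ μ x := inv_inv _
  have hmain : T * ∏ j : Fin k, (T / (Fintype.card (A j) : ℝ)) ≤ N := by
    calc T * ∏ j : Fin k, (T / (Fintype.card (A j) : ℝ))
        ≤ T * ∏ j : Fin k, ∏ x : Fin (k+1) → X, (n j x) ^ μ x := by
          apply mul_le_mul_of_nonneg_left _ hT0.le
          exact Finset.prod_le_prod (fun j _ => div_nonneg hT0.le (hAj j).le) (fun j _ => hQ j)
      _ = (∏ x : Fin (k+1) → X, T ^ μ x) *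
            ∏ j : Fin k, ∏ x : Fin (k+1) → X, (n j x) ^ μ x := by rw [hTpow]
      _ = ∏ x : Fin (k+1) → X, z x ^ μ x := hsplit.symm
      _ ≤ ∑ x : Fin (k+1) → X, μ x * z x := amgm
      _ = N := hNval
  have hprodpos : (0:ℝ) < ∏ j : Fin k, (Fintype.card (A j) : ℝ) :=
    Finset.prod_pos fun j _ => hAj j
  have hTk : T ^ (k+1) = (∏ j : Fin k, (Fintype.card (A j) : ℝ)) *
      (T * ∏ j : Fin k, (T / (Fintype.card (A j) : ℝ))) := by
    rw [Finset.prod_div_distrib, Finset.prod_const, Finset.card_univ, Fintype.card_fin]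
    field_simp
    ring
  have hreal : T ^ (k+1) ≤ (∏ j : Fin k, (Fintype.card (A j) : ℝ)) * N := by
    rw [hTk]
    exact mul_le_mul_of_nonneg_left hmain hprodpos.le
  -- identify N with the cardinality of the chain set
  have hNnat : N = (Nat.card {x : Fin (k + 1) → X //
      ∀ i : Fin k, g i (x i.castSucc) = g i (x i.succ)} : ℝ) := by
    rw [Nat.card_eq_fintype_card, Fintype.card_subtype, hN]
    rw [← Finset.sum_boole]
    apply Finset.sum_congr rfl
    intro x _
    rw [cind]
  rw [hNnat] at hreal
  refine (Nat.cast_le (α := ℝ)).mp ?_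
  push_cast
  simp only [Nat.card_eq_fintype_card] at hreal ⊢
  exact hreal
end

section
/- Let X and A₁, …, A_k be finite sets (k ≥ 2), let f_j : X → A_j be functions for 1 ≤ j ≤ k, and let 1 ≤ m ≤ k. Let ℋ := {(x,y) ∈ X × X : f₁(x) = f₁(y)}. If the map H : ℋ → A₂ × … × A_k defined by H(x,y) := (f₂(x), …, f_m(x), f_{m+1}(y), …, f_k(y)) is injective, then |X|² ≤ ∏_{j=1}^k |A_j|. -/
/-- Cauchy–Schwarz style pair counting over ℕ. -/
lemma sq_sum_le_card_mul_sum_sq_nat {ι : Type*} (s : Finset ι) (f : ι → ℕ) :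
    (∑ i ∈ s, f i) ^ 2 ≤ s.card * ∑ i ∈ s, f i ^ 2 := by
  have := sq_sum_le_card_mul_sum_sq (s := s) (f := fun i => (f i : ℤ))
  have h2 : ((∑ i ∈ s, f i : ℕ) : ℤ) ^ 2 ≤ ((s.card * ∑ i ∈ s, f i ^ 2 : ℕ) : ℤ) := by
    push_cast
    exact this
  exact_mod_cast h2

/-- Abstract counting statement for the case `d = 2`.  Here `A j` (for `j : Fin k`)
plays the role of `A_{j+1}`, and `f j : X → A j` of `f_{j+1}`.  The set `ℋ` consists of
pairs `(x,y)` with `f₁ x = f₁ y`, and the map `H` sends `(x,y)` to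
`(f₂ x, …, f_m x, f_{m+1} y, …, f_k y)` (an index `j : Fin k` with `j ≠ 0` contributes
the entry `f j x` if `j.val + 1 ≤ m` and `f j y` otherwise).  If `H` is injective, then
`|X|² ≤ ∏_{j=1}^k |A_j|`. -/
theorem counting_d_two {k m : ℕ} (hk : 2 ≤ k) (hm1 : 1 ≤ m) (hmk : m ≤ k)
    {X : Type*} [Fintype X] (A : Fin k → Type*) [∀ j, Fintype (A j)]
    (f : ∀ j : Fin k, X → A j)
    (hH : Function.Injective
      (fun (p : {p : X × X // f ⟨0, by omega⟩ p.1 = f ⟨0, by omega⟩ p.2}) =>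
        fun (j : {j : Fin k // j.val ≠ 0}) =>
          if j.1.val + 1 ≤ m then f j.1 p.1.1 else f j.1 p.1.2)) :
    Nat.card X ^ 2 ≤ ∏ j, Nat.card (A j) := by
  classical
  set i0 : Fin k := ⟨0, by omega⟩ with hi0
  -- fibers of f i0
  let N : A i0 → ℕ := fun a => Fintype.card {x : X // f i0 x = a}
  -- ℋ
  have hHcard : Fintype.card {p : X × X // f i0 p.1 = f i0 p.2}
      = ∑ a : A i0, N a ^ 2 := by
    have e : {p : X × X // f i0 p.1 = f i0 p.2} ≃
        Σ a : A i0, ({x : X // f i0 x = a} × {x : X // f i0 x = a}) :=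
      { toFun := fun p => ⟨f i0 p.1.1, ⟨⟨p.1.1, rfl⟩, ⟨p.1.2, p.2.symm⟩⟩⟩
        invFun := fun q => ⟨(q.2.1.1, q.2.2.1), by rw [q.2.1.2, q.2.2.2]⟩
        left_inv := fun p => rfl
        right_inv := fun q => by
          obtain ⟨a, x, y⟩ := q
          obtain ⟨x, hx⟩ := x
          subst hx
          rfl }
    rw [Fintype.card_congr e, Fintype.card_sigma]
    simp [N, sq]
  have hXcard : Fintype.card X = ∑ a : A i0, N a := by
    simpa [N] using (Fintype.sum_fiberwise (f i0) (fun _ => (1 : ℕ))).symm.trans (by simp)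
  -- Cauchy-Schwarz step
  have h1 : Fintype.card X ^ 2 ≤
      Fintype.card (A i0) * Fintype.card {p : X × X // f i0 p.1 = f i0 p.2} := by
    rw [hXcard, hHcard]
    simpa using sq_sum_le_card_mul_sum_sq_nat Finset.univ N
  -- injectivity step
  have h2 : Fintype.card {p : X × X // f i0 p.1 = f i0 p.2}
      ≤ ∏ j : {j : Fin k // j.val ≠ 0}, Fintype.card (A j.1) := by
    have := Fintype.card_le_of_injective _ hH
    simpa [Fintype.card_pi] using this
  -- product split
  have h3 : (∏ j, Fintype.card (A j))
      = Fintype.card (A i0) * ∏ j : {j : Fin k // j.val ≠ 0}, Fintype.card (A j.1) := by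
    rw [← Finset.prod_subtype (Finset.univ.erase i0)
      (fun j => by simp [Fin.ext_iff, hi0, eq_comm]) (fun j => Fintype.card (A j))]
    exact (Finset.mul_prod_erase Finset.univ _ (Finset.mem_univ i0)).symm
  simp only [Nat.card_eq_fintype_card]
  calc Fintype.card X ^ 2
      ≤ Fintype.card (A i0) * Fintype.card {p : X × X // f i0 p.1 = f i0 p.2} := h1
    _ ≤ Fintype.card (A i0) * ∏ j : {j : Fin k // j.val ≠ 0}, Fintype.card (A j.1) :=
        Nat.mul_le_mul_left _ h2
    _ = ∏ j, Fintype.card (A j) := h3.symm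
end

section
/- Let d ≥ 2 and m ≥ 2, let X and A₁, …, A_m be finite sets, and let f_j : X → A_j be functions for 1 ≤ j ≤ m. Let 𝒞 := {(x₁,…,x_d) ∈ X^d : f₁(x_i) = f₁(x_{i+1}) for all 1 ≤ i ≤ d−1}. If the map H : 𝒞 → ∏_{i=1}^{d} ∏_{j=2}^{m} A_j defined by H(x₁,…,x_d) := (f_j(x_i))_{2 ≤ j ≤ m, 1 ≤ i ≤ d} is injective, then |X|^d ≤ |A₁|^{d-1} · ∏_{j=2}^{m} |A_j|^d. -/
/-- Abstract counting statement for general dimension `d = e + 1 ≥ 2` and `n` even.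
Here `A j` (for `j : Fin m`) plays the role of `A_{j+1}` and `f j` of `f_{j+1}`.
`𝒞` is the set of chains `(x₁,…,x_d) ∈ X^d` with `f₁(xᵢ) = f₁(x_{i+1})` for all
`1 ≤ i ≤ d−1`, and `H` sends a chain to the family `(f_j(x_i))_{2 ≤ j ≤ m, 1 ≤ i ≤ d}`.
If `H` is injective, then `|X|^d ≤ |A₁|^{d-1} · ∏_{j=2}^m |A_j|^d`. -/
theorem counting_general_d_even_n {e m : ℕ} (he : 1 ≤ e) (hm : 2 ≤ m)
    {X : Type*} [Fintype X] (A : Fin m → Type*) [∀ j, Fintype (A j)]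
    (f : ∀ j : Fin m, X → A j)
    (hH : Function.Injective
      (fun (x : {x : Fin (e + 1) → X //
          ∀ i : Fin e, f ⟨0, by omega⟩ (x i.castSucc) = f ⟨0, by omega⟩ (x i.succ)}) =>
        fun (i : Fin (e + 1)) (j : {j : Fin m // j.val ≠ 0}) => f j.1 (x.1 i))) :
    Nat.card X ^ (e + 1) ≤
      Nat.card (A ⟨0, by omega⟩) ^ e *
        ∏ j ∈ Finset.univ.filter (fun j : Fin m => j.val ≠ 0), Nat.card (A j) ^ (e + 1) := by
  classical
  set z : Fin m := ⟨0, by omega⟩ with hz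
  set f0 : X → A z := f z with hf0
  set C := {x : Fin (e + 1) → X //
      ∀ i : Fin e, f z (x i.castSucc) = f z (x i.succ)} with hC
  -- all entries of a chain have the same `f0` value
  have hconst : ∀ (x : C) (i : Fin (e + 1)), f0 (x.1 i) = f0 (x.1 0) := by
    rintro x i
    induction i using Fin.induction with
    | zero => rfl
    | succ i ih => exact (x.2 i).symm.trans ih
  -- chains are the sigma type of fibers
  have key : ∀ a : A z, Nat.card {x : C // f0 (x.1 0) = a}
      = Nat.card {y : X // f0 y = a} ^ (e + 1) := by
    intro a
    have E2 : {x : C // f0 (x.1 0) = a} ≃ (Fin (e + 1) → {y : X // f0 y = a}) :=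
      { toFun := fun x i => ⟨x.1.1 i, (hconst x.1 i).trans x.2⟩
        invFun := fun g => ⟨⟨fun i => (g i).1, fun i => by
            rw [show f z ((g i.castSucc).1) = a from (g i.castSucc).2,
              show f z ((g i.succ).1) = a from (g i.succ).2]⟩, (g 0).2⟩
        left_inv := fun x => rfl
        right_inv := fun g => rfl }
    rw [Nat.card_congr E2, Nat.card_fun, Nat.card_eq_fintype_card (α := Fin (e + 1)),
      Fintype.card_fin]
  have hCcard : Nat.card C = ∑ a : A z, Nat.card {x : X // f0 x = a} ^ (e + 1) := by
    rw [Nat.card_congr (Equiv.sigmaFiberEquiv (fun x : C => f0 (x.1 0))).symm]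
    rw [Nat.card_eq_fintype_card, Fintype.card_sigma]
    refine Finset.sum_congr rfl fun a _ => ?_
    rw [← key a, ← Nat.card_eq_fintype_card]
  -- injectivity bound on chains
  have hCle : Nat.card C ≤
      ∏ j ∈ Finset.univ.filter (fun j : Fin m => j.val ≠ 0), Nat.card (A j) ^ (e + 1) := by
    have := Nat.card_le_card_of_injective _ hH
    refine this.trans ?_
    rw [Nat.card_pi]
    have : ∀ i : Fin (e + 1), Nat.card (∀ j : {j : Fin m // j.val ≠ 0}, A j.1)
        = ∏ j ∈ Finset.univ.filter (fun j : Fin m => j.val ≠ 0), Nat.card (A j) := by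
      intro i
      rw [Nat.card_pi]
      exact (Finset.prod_subtype _ (by simp) (fun j => Nat.card (A j))).symm
    rw [Finset.prod_congr rfl (fun i _ => this i), Finset.prod_const, Finset.card_univ,
      Fintype.card_fin, ← Finset.prod_pow]
  -- Jensen: |X|^(e+1) ≤ |A z|^e * ∑ n_a^(e+1)
  have hX : Nat.card X = ∑ a : A z, Nat.card {x : X // f0 x = a} := by
    rw [Nat.card_congr (Equiv.sigmaFiberEquiv f0).symm, Nat.card_eq_fintype_card,
      Fintype.card_sigma]
    refine Finset.sum_congr rfl fun a _ => ?_
    rw [← Nat.card_eq_fintype_card]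
  have hJ : (Nat.card X : ℚ) ^ (e + 1) ≤
      (Nat.card (A z) : ℚ) ^ e * ∑ a : A z, (Nat.card {x : X // f0 x = a} : ℚ) ^ (e + 1) := by
    have := pow_sum_le_card_mul_sum_pow
      (s := (Finset.univ : Finset (A z)))
      (f := fun a => (Nat.card {x : X // f0 x = a} : ℚ)) (fun i _ => by positivity) e
    rw [Finset.card_univ, ← Nat.card_eq_fintype_card] at this
    calc (Nat.card X : ℚ) ^ (e + 1)
        = (∑ a : A z, (Nat.card {x : X // f0 x = a} : ℚ)) ^ (e + 1) := by
          rw [← Nat.cast_sum, ← hX]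
      _ ≤ _ := this
  have hJ' : Nat.card X ^ (e + 1) ≤ Nat.card (A z) ^ e * Nat.card C := by
    have : ((Nat.card X ^ (e + 1) : ℕ) : ℚ) ≤ ((Nat.card (A z) ^ e * Nat.card C : ℕ) : ℚ) := by
      push_cast [hCcard]
      exact hJ
    exact_mod_cast this
  calc Nat.card X ^ (e + 1) ≤ Nat.card (A z) ^ e * Nat.card C := hJ'
    _ ≤ _ := Nat.mul_le_mul_left _ hCle
end

section
/- Let d ≥ 3 be odd and m ≥ 2, let X and A₁, …, A_{m+1} be finite sets, and let f_j : X → A_j be functions for 1 ≤ j ≤ m+1. Let 𝒞 := {(x₁,…,x_d) ∈ X^d : f₁(x_i) = f₁(x_{i+1}) for all odd i with 1 ≤ i ≤ d−1, and f₂(x_i) = f₂(x_{i+1}) for all even i with 1 ≤ i ≤ d−1}. If the map H on 𝒞 defined by H(x₁,…,x_d) := ((f_j(x_i))_{3 ≤ j ≤ m, 1 ≤ i ≤ d}, (f_{m+1}(x_i))_{i odd, 1 ≤ i ≤ d}) is injective, then |X|^d ≤ (|A₁| · |A₂|)^{(d-1)/2} · (∏_{j=3}^{m} |A_j|)^d ·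 |A_{m+1}|^{(d+1)/2}. -/
open Finset

section Aux

variable {X B₁ B₂ : Type*}

def AltChain {X B₁ B₂ : Type*} (g₁ : X → B₁) (g₂ : X → B₂) (e : ℕ)
    (x : Fin (2 * e + 1) → X) : Prop :=
  ∀ i : Fin (2 * e),
    (i.val % 2 = 0 → g₁ (x i.castSucc) = g₁ (x i.succ)) ∧
    (i.val % 2 = 1 → g₂ (x i.castSucc) = g₂ (x i.succ))

/-- Cleaning lemma: any finite set has a large subset all of whose fibers are large. -/
lemma cleaning [DecidableEq X] [DecidableEq B₁] [DecidableEq B₂] (g₁ : X → B₁) (g₂ : X → B₂) (θ₁ θ₂ : ℕ)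
    (S : Finset X) :
    ∃ T : Finset X, T ⊆ S ∧
      (∀ x ∈ T, θ₁ + 1 ≤ (T.filter (fun y => g₁ y = g₁ x)).card ∧
        θ₂ + 1 ≤ (T.filter (fun y => g₂ y = g₂ x)).card) ∧
      S.card ≤ T.card + θ₁ * (S.image g₁).card + θ₂ * (S.image g₂).card := by
  induction S using Finset.strongInduction with
  | _ S ih =>
    by_cases hgood : ∀ x ∈ S, θ₁ + 1 ≤ (S.filter (fun y => g₁ y = g₁ x)).card ∧
        θ₂ + 1 ≤ (S.filter (fun y => g₂ y = g₂ x)).card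
    · exact ⟨S, Finset.Subset.refl S, hgood, by omega⟩
    · push_neg at hgood
      obtain ⟨x, hxS, hx⟩ := hgood
      by_cases h1 : θ₁ + 1 ≤ (S.filter (fun y => g₁ y = g₁ x)).card
      · -- the g₂-fiber of x is small
        have h2 := hx h1
        set F := S.filter (fun y => g₂ y = g₂ x) with hF
        have hFS : F ⊆ S := Finset.filter_subset _ _
        have hxF : x ∈ F := Finset.mem_filter.mpr ⟨hxS, rfl⟩
        obtain ⟨T, hTsub, hTgood, hTcard⟩ := ih (S \ F) (Finset.sdiff_ssubset hFS ⟨x, hxF⟩)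
        refine ⟨T, hTsub.trans (Finset.sdiff_subset), hTgood, ?_⟩
        have hcard : (S \ F).card + F.card = S.card := Finset.card_sdiff_add_card_eq_card hFS
        have hFle : F.card ≤ θ₂ := by omega
        have him2 : ((S \ F).image g₂).card + 1 ≤ (S.image g₂).card := by
          have hsub : (S \ F).image g₂ ⊆ (S.image g₂).erase (g₂ x) := by
            intro b hb
            obtain ⟨y, hy, rfl⟩ := Finset.mem_image.mp hb
            have hyS : y ∈ S := (Finset.mem_sdiff.mp hy).1
            have hyF : y ∉ F := (Finset.mem_sdiff.mp hy).2
            refine Finset.mem_erase.mpr ⟨?_, Finset.mem_image_of_mem _ hyS⟩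
            intro hgy
            exact hyF (Finset.mem_filter.mpr ⟨hyS, hgy⟩)
          have h3 := Finset.card_le_card hsub
          have h4 : (g₂ x) ∈ S.image g₂ := Finset.mem_image_of_mem _ hxS
          have h5 := Finset.card_erase_of_mem h4
          have h6 : 1 ≤ (S.image g₂).card := Finset.card_pos.mpr ⟨_, h4⟩
          omega
        have him1 : ((S \ F).image g₁).card ≤ (S.image g₁).card :=
          Finset.card_le_card (Finset.image_subset_image Finset.sdiff_subset)
        have key1 : θ₁ * ((S \ F).image g₁).card ≤ θ₁ * (S.image g₁).card :=
          Nat.mul_le_mul_left _ him1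
        have key2 : θ₂ * (((S \ F).image g₂).card + 1) ≤ θ₂ * (S.image g₂).card :=
          Nat.mul_le_mul_left _ him2
        have key2' : θ₂ * (((S \ F).image g₂).card + 1)
            = θ₂ * ((S \ F).image g₂).card + θ₂ := by ring
        omega
      · -- the g₁-fiber of x is small
        set F := S.filter (fun y => g₁ y = g₁ x) with hF
        have hFS : F ⊆ S := Finset.filter_subset _ _
        have hxF : x ∈ F := Finset.mem_filter.mpr ⟨hxS, rfl⟩
        obtain ⟨T, hTsub, hTgood, hTcard⟩ := ih (S \ F) (Finset.sdiff_ssubset hFS ⟨x, hxF⟩)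
        refine ⟨T, hTsub.trans (Finset.sdiff_subset), hTgood, ?_⟩
        have hcard : (S \ F).card + F.card = S.card := Finset.card_sdiff_add_card_eq_card hFS
        have hFle : F.card ≤ θ₁ := by omega
        have him1 : ((S \ F).image g₁).card + 1 ≤ (S.image g₁).card := by
          have hsub : (S \ F).image g₁ ⊆ (S.image g₁).erase (g₁ x) := by
            intro b hb
            obtain ⟨y, hy, rfl⟩ := Finset.mem_image.mp hb
            have hyS : y ∈ S := (Finset.mem_sdiff.mp hy).1
            have hyF : y ∉ F := (Finset.mem_sdiff.mp hy).2
            refine Finset.mem_erase.mpr ⟨?_, Finset.mem_image_of_mem _ hyS⟩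
            intro hgy
            exact hyF (Finset.mem_filter.mpr ⟨hyS, hgy⟩)
          have h3 := Finset.card_le_card hsub
          have h4 : (g₁ x) ∈ S.image g₁ := Finset.mem_image_of_mem _ hxS
          have h5 := Finset.card_erase_of_mem h4
          have h6 : 1 ≤ (S.image g₁).card := Finset.card_pos.mpr ⟨_, h4⟩
          omega
        have him2 : ((S \ F).image g₂).card ≤ (S.image g₂).card :=
          Finset.card_le_card (Finset.image_subset_image Finset.sdiff_subset)
        have key2 : θ₂ * ((S \ F).image g₂).card ≤ θ₂ * (S.image g₂).card :=
          Nat.mul_le_mul_left _ him2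
        have key1 : θ₁ * (((S \ F).image g₁).card + 1) ≤ θ₁ * (S.image g₁).card :=
          Nat.mul_le_mul_left _ him1
        have key1' : θ₁ * (((S \ F).image g₁).card + 1)
            = θ₁ * ((S \ F).image g₁).card + θ₁ := by ring
        omega

def buildY (E1 E2 : X → ℕ → X) (s : X) : ℕ → X
  | 0 => s
  | (j+1) => if j % 2 = 0 then E1 (buildY E1 E2 s j) (j / 2) else E2 (buildY E1 E2 s j) (j / 2)

lemma buildY_mem (T : Finset X) (E1 E2 : X → ℕ → X)
    (h1 : ∀ z ∈ T, ∀ t, E1 z t ∈ T) (h2 : ∀ z ∈ T, ∀ t, E2 z t ∈ T)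
    (s : X) (hs : s ∈ T) : ∀ j, buildY E1 E2 s j ∈ T := by
  intro j
  induction j with
  | zero => exact hs
  | succ j ihj =>
    rw [buildY]
    split
    · exact h1 _ ihj _
    · exact h2 _ ihj _

lemma buildY_chain (g₁ : X → B₁) (g₂ : X → B₂) (e : ℕ) (T : Finset X) (E1 E2 : X → ℕ → X)
    (h1 : ∀ z ∈ T, ∀ t, E1 z t ∈ T ∧ g₁ (E1 z t) = g₁ z)
    (h2 : ∀ z ∈ T, ∀ t, E2 z t ∈ T ∧ g₂ (E2 z t) = g₂ z)
    (s : X) (hs : s ∈ T) :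
    AltChain g₁ g₂ e (fun i => buildY E1 E2 s i.val) := by
  have hmem := buildY_mem T E1 E2 (fun z hz t => (h1 z hz t).1) (fun z hz t => (h2 z hz t).1) s hs
  intro i
  constructor
  · intro hi
    show g₁ (buildY E1 E2 s i.castSucc.val) = g₁ (buildY E1 E2 s i.succ.val)
    have hc : i.castSucc.val = i.val := rfl
    have hsu : i.succ.val = i.val + 1 := rfl
    rw [hc, hsu, buildY, if_pos hi]
    exact ((h1 _ (hmem _) _).2).symm
  · intro hi
    show g₂ (buildY E1 E2 s i.castSucc.val) = g₂ (buildY E1 E2 s i.succ.val)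
    have hc : i.castSucc.val = i.val := rfl
    have hsu : i.succ.val = i.val + 1 := rfl
    rw [hc, hsu, buildY, if_neg (by omega : ¬ i.val % 2 = 0)]
    exact ((h2 _ (hmem _) _).2).symm

lemma chains_lower [DecidableEq X] [DecidableEq B₁] [DecidableEq B₂] [Fintype X]
    (g₁ : X → B₁) (g₂ : X → B₂) (e θ₁ θ₂ : ℕ) (hθ₁ : 0 < θ₁) (hθ₂ : 0 < θ₂)
    (T : Finset X)
    (hgood : ∀ x ∈ T, θ₁ ≤ (T.filter (fun y => g₁ y = g₁ x)).card ∧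
        θ₂ ≤ (T.filter (fun y => g₂ y = g₂ x)).card) :
    T.card * (θ₁ * θ₂) ^ e ≤ Nat.card {x : Fin (2 * e + 1) → X // AltChain g₁ g₂ e x} := by
  classical
  -- choose injections into fibers
  have hex1 : ∀ x : X, ∃ E : Fin θ₁ → X, x ∈ T →
      (Function.Injective E ∧ ∀ i, E i ∈ T ∧ g₁ (E i) = g₁ x) := by
    intro x
    by_cases hx : x ∈ T
    · have h := (hgood x hx).1
      have hcard : Fintype.card (Fin θ₁) ≤
          Fintype.card {y // y ∈ T.filter (fun y => g₁ y = g₁ x)} := by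
        rw [Fintype.card_fin, Fintype.card_coe]; exact h
      obtain ⟨emb⟩ := Function.Embedding.nonempty_of_card_le hcard
      refine ⟨fun i => (emb i : X), fun _ => ⟨?_, ?_⟩⟩
      · intro a b hab
        exact emb.injective (Subtype.ext hab)
      · intro i
        have hmem := (emb i).2
        rw [Finset.mem_filter] at hmem
        exact hmem
    · exact ⟨fun _ => x, fun h => absurd h hx⟩
  have hex2 : ∀ x : X, ∃ E : Fin θ₂ → X, x ∈ T →
      (Function.Injective E ∧ ∀ i, E i ∈ T ∧ g₂ (E i) = g₂ x) := by
    intro x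
    by_cases hx : x ∈ T
    · have h := (hgood x hx).2
      have hcard : Fintype.card (Fin θ₂) ≤
          Fintype.card {y // y ∈ T.filter (fun y => g₂ y = g₂ x)} := by
        rw [Fintype.card_fin, Fintype.card_coe]; exact h
      obtain ⟨emb⟩ := Function.Embedding.nonempty_of_card_le hcard
      refine ⟨fun i => (emb i : X), fun _ => ⟨?_, ?_⟩⟩
      · intro a b hab
        exact emb.injective (Subtype.ext hab)
      · intro i
        have hmem := (emb i).2
        rw [Finset.mem_filter] at hmem
        exact hmem
    · exact ⟨fun _ => x, fun h => absurd h hx⟩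
  choose E1 hE1 using hex1
  choose E2 hE2 using hex2
  -- total choice extension
  let pick : (Fin e → Fin θ₁ × Fin θ₂) → ℕ → Fin θ₁ × Fin θ₂ :=
    fun c t => if h : t < e then c ⟨t, h⟩ else (⟨0, hθ₁⟩, ⟨0, hθ₂⟩)
  let F1 : (Fin e → Fin θ₁ × Fin θ₂) → X → ℕ → X := fun c z t => E1 z (pick c t).1
  let F2 : (Fin e → Fin θ₁ × Fin θ₂) → X → ℕ → X := fun c z t => E2 z (pick c t).2
  have hF1 : ∀ c, ∀ z ∈ T, ∀ t, F1 c z t ∈ T ∧ g₁ (F1 c z t) = g₁ z :=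
    fun c z hz t => (hE1 z hz).2 _
  have hF2 : ∀ c, ∀ z ∈ T, ∀ t, F2 c z t ∈ T ∧ g₂ (F2 c z t) = g₂ z :=
    fun c z hz t => (hE2 z hz).2 _
  -- the injection
  let Ψ : (↥T × (Fin e → Fin θ₁ × Fin θ₂)) → {x : Fin (2 * e + 1) → X // AltChain g₁ g₂ e x} :=
    fun p => ⟨fun i => buildY (F1 p.2) (F2 p.2) p.1.1 i.val,
      buildY_chain g₁ g₂ e T _ _ (hF1 p.2) (hF2 p.2) p.1.1 p.1.2⟩
  have hinj : Function.Injective Ψ := by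
    rintro ⟨⟨s, hs⟩, c⟩ ⟨⟨s', hs'⟩, c'⟩ hΨ
    have hfun := congrArg Subtype.val hΨ
    have hy : ∀ j, j < 2 * e + 1 →
        buildY (F1 c) (F2 c) s j = buildY (F1 c') (F2 c') s' j := by
      intro j hj
      exact congrFun hfun (⟨j, hj⟩ : Fin (2 * e + 1))
    have hm : ∀ j, buildY (F1 c) (F2 c) s j ∈ T :=
      buildY_mem T _ _ (fun z hz t => (hF1 c z hz t).1) (fun z hz t => (hF2 c z hz t).1) s hs
    have hm' : ∀ j, buildY (F1 c') (F2 c') s' j ∈ T :=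
      buildY_mem T _ _ (fun z hz t => (hF1 c' z hz t).1) (fun z hz t => (hF2 c' z hz t).1) s' hs'
    have hs0 : s = s' := hy 0 (by omega)
    refine Prod.ext (Subtype.ext hs0) ?_
    funext k
    have hk := k.isLt
    have heven : ∀ (c0 : Fin e → Fin θ₁ × Fin θ₂) (s0 : X),
        buildY (F1 c0) (F2 c0) s0 (2 * k.val + 1)
          = E1 (buildY (F1 c0) (F2 c0) s0 (2 * k.val)) (c0 k).1 := by
      intro c0 s0
      rw [buildY, if_pos (by omega : 2 * k.val % 2 = 0)]
      show E1 _ (pick c0 (2 * k.val / 2)).1 = _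
      rw [(by omega : 2 * k.val / 2 = k.val)]
      show E1 _ ((if h : k.val < e then c0 ⟨k.val, h⟩ else (⟨0, hθ₁⟩, ⟨0, hθ₂⟩)).1) = _
      rw [dif_pos k.isLt]
    have hodd : ∀ (c0 : Fin e → Fin θ₁ × Fin θ₂) (s0 : X),
        buildY (F1 c0) (F2 c0) s0 (2 * k.val + 2)
          = E2 (buildY (F1 c0) (F2 c0) s0 (2 * k.val + 1)) (c0 k).2 := by
      intro c0 s0
      rw [buildY, if_neg (by omega : ¬ (2 * k.val + 1) % 2 = 0)]
      show E2 _ (pick c0 ((2 * k.val + 1) / 2)).2 = _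
      rw [(by omega : (2 * k.val + 1) / 2 = k.val)]
      show E2 _ ((if h : k.val < e then c0 ⟨k.val, h⟩ else (⟨0, hθ₁⟩, ⟨0, hθ₂⟩)).2) = _
      rw [dif_pos k.isLt]
    have h2k : buildY (F1 c) (F2 c) s (2 * k.val) = buildY (F1 c') (F2 c') s' (2 * k.val) :=
      hy _ (by omega)
    have h2k1 : buildY (F1 c) (F2 c) s (2 * k.val + 1)
        = buildY (F1 c') (F2 c') s' (2 * k.val + 1) := hy _ (by omega)
    have h2k2 : buildY (F1 c) (F2 c) s (2 * k.val + 2)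
        = buildY (F1 c') (F2 c') s' (2 * k.val + 2) := hy _ (by omega)
    have hfst : (c k).1 = (c' k).1 := by
      have := h2k1
      rw [heven c s, heven c' s', ← h2k] at this
      exact (hE1 _ (hm (2 * k.val))).1 this
    have hsnd : (c k).2 = (c' k).2 := by
      have := h2k2
      rw [hodd c s, hodd c' s', ← h2k1] at this
      exact (hE2 _ (hm (2 * k.val + 1))).1 this
    exact Prod.ext hfst hsnd
  have hle := Nat.card_le_card_of_injective Ψ hinj
  have hdom : Nat.card (↥T × (Fin e → Fin θ₁ × Fin θ₂)) = T.card * (θ₁ * θ₂) ^ e := by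
    simp [Nat.card_eq_fintype_card, Fintype.card_prod, Fintype.card_fun]
  rwa [hdom] at hle

lemma crude [Fintype X] [Fintype B₁] [Fintype B₂]
    (g₁ : X → B₁) (g₂ : X → B₂) (e : ℕ) :
    Fintype.card X ^ (2 * e + 1) ≤
      2 * 16 ^ e * (Fintype.card B₁ * Fintype.card B₂) ^ e *
        Nat.card {x : Fin (2 * e + 1) → X // AltChain g₁ g₂ e x} := by
  classical
  rcases isEmpty_or_nonempty X with hX | hX
  · simp [Fintype.card_eq_zero]
  · have hB₁ : Nonempty B₁ := ⟨g₁ (Classical.arbitrary X)⟩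
    have hB₂ : Nonempty B₂ := ⟨g₂ (Classical.arbitrary X)⟩
    set x := Fintype.card X with hx
    set n₁ := Fintype.card B₁ with hn1
    set n₂ := Fintype.card B₂ with hn2
    have hn₁ : 0 < n₁ := Fintype.card_pos
    have hn₂ : 0 < n₂ := Fintype.card_pos
    obtain ⟨T, hTsub, hTgood, hTcard⟩ :=
      cleaning g₁ g₂ (x / (4 * n₁)) (x / (4 * n₂)) Finset.univ
    have hcount := chains_lower g₁ g₂ e (x / (4 * n₁) + 1) (x / (4 * n₂) + 1)
      (Nat.succ_pos _) (Nat.succ_pos _) T hTgood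
    -- numeric facts
    have him1 : (Finset.univ.image g₁).card ≤ n₁ := Finset.card_le_univ _
    have him2 : (Finset.univ.image g₂).card ≤ n₂ := Finset.card_le_univ _
    have hcardT : x ≤ T.card + x / (4 * n₁) * (Finset.univ.image g₁).card
        + x / (4 * n₂) * (Finset.univ.image g₂).card := by
      simpa [Finset.card_univ] using hTcard
    have hq1 : x / (4 * n₁) * (Finset.univ.image g₁).card ≤ x / 4 := by
      calc x / (4 * n₁) * (Finset.univ.image g₁).card ≤ x / (4 * n₁) * n₁ :=
            Nat.mul_le_mul_left _ him1
        _ = x / 4 / n₁ * n₁ := by rw [Nat.div_div_eq_div_mul]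
        _ ≤ x / 4 := Nat.div_mul_le_self _ _
    have hq2 : x / (4 * n₂) * (Finset.univ.image g₂).card ≤ x / 4 := by
      calc x / (4 * n₂) * (Finset.univ.image g₂).card ≤ x / (4 * n₂) * n₂ :=
            Nat.mul_le_mul_left _ him2
        _ = x / 4 / n₂ * n₂ := by rw [Nat.div_div_eq_div_mul]
        _ ≤ x / 4 := Nat.div_mul_le_self _ _
    have hx4 : x / 4 * 4 ≤ x := Nat.div_mul_le_self _ _
    have h2T : x ≤ 2 * T.card := by omega
    have h4n1 : x ≤ 4 * n₁ * (x / (4 * n₁) + 1) := by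
      have h := Nat.div_add_mod x (4 * n₁)
      have hm := Nat.mod_lt x (show 0 < 4 * n₁ by omega)
      calc x = 4 * n₁ * (x / (4 * n₁)) + x % (4 * n₁) := h.symm
        _ ≤ 4 * n₁ * (x / (4 * n₁)) + 4 * n₁ := Nat.add_le_add_left hm.le _
        _ = 4 * n₁ * (x / (4 * n₁) + 1) := by ring
    have h4n2 : x ≤ 4 * n₂ * (x / (4 * n₂) + 1) := by
      have h := Nat.div_add_mod x (4 * n₂)
      have hm := Nat.mod_lt x (show 0 < 4 * n₂ by omega)
      calc x = 4 * n₂ * (x / (4 * n₂)) + x % (4 * n₂) := h.symm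
        _ ≤ 4 * n₂ * (x / (4 * n₂)) + 4 * n₂ := Nat.add_le_add_left hm.le _
        _ = 4 * n₂ * (x / (4 * n₂) + 1) := by ring
    set θa := x / (4 * n₁) + 1 with hθa
    set θb := x / (4 * n₂) + 1 with hθb
    clear_value θa θb
    calc x ^ (2 * e + 1) = x * (x * x) ^ e := by ring
      _ ≤ (2 * T.card) * ((4 * n₁ * θa) * (4 * n₂ * θb)) ^ e :=
          Nat.mul_le_mul h2T (Nat.pow_le_pow_left (Nat.mul_le_mul h4n1 h4n2) e)
      _ = 2 * 16 ^ e * (n₁ * n₂) ^ e * (T.card * (θa * θb) ^ e) := by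
          ring
      _ ≤ 2 * 16 ^ e * (n₁ * n₂) ^ e *
            Nat.card {x : Fin (2 * e + 1) → X // AltChain g₁ g₂ e x} :=
          Nat.mul_le_mul_left _ hcount

lemma altChain_pi_card (g₁ : X → B₁) (g₂ : X → B₂) (e N : ℕ) :
    Nat.card {x : Fin (2 * e + 1) → (Fin N → X) //
        AltChain (fun v (j : Fin N) => g₁ (v j)) (fun v (j : Fin N) => g₂ (v j)) e x}
      = Nat.card {x : Fin (2 * e + 1) → X // AltChain g₁ g₂ e x} ^ N := by
  have hEquiv : {x : Fin (2 * e + 1) → (Fin N → X) //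
      AltChain (fun v (j : Fin N) => g₁ (v j)) (fun v (j : Fin N) => g₂ (v j)) e x}
      ≃ (Fin N → {x : Fin (2 * e + 1) → X // AltChain g₁ g₂ e x}) :=
    { toFun := fun x j => ⟨fun i => x.1 i j, fun i =>
        ⟨fun h => congrFun ((x.2 i).1 h) j, fun h => congrFun ((x.2 i).2 h) j⟩⟩
      invFun := fun F => ⟨fun i j => (F j).1 i, fun i =>
        ⟨fun h => funext fun j => ((F j).2 i).1 h, fun h => funext fun j => ((F j).2 i).2 h⟩⟩
      left_inv := fun x => rfl
      right_inv := fun F => rfl }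
  rw [Nat.card_congr hEquiv, Nat.card_fun, Nat.card_eq_fintype_card (α := Fin N),
    Fintype.card_fin]

lemma le_of_forall_pow_le {a b C : ℕ} (h : ∀ N, b ^ N ≤ C * a ^ N) : b ≤ a := by
  by_contra hab
  push_neg at hab
  rcases Nat.eq_zero_or_pos a with rfl | ha
  · have h1 := h 1
    simp at h1
    omega
  · have hbin : ∀ M : ℕ, a ^ (M + 1) + (M + 1) * a ^ M ≤ (a + 1) ^ (M + 1) := by
      intro M
      induction M with
      | zero => simp [pow_succ]
      | succ m ih =>
        calc a ^ (m + 2) + (m + 2) * a ^ (m + 1)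
            ≤ a ^ (m + 2) + (m + 2) * a ^ (m + 1) + (m + 1) * a ^ m := Nat.le_add_right _ _
          _ = (a ^ (m + 1) + (m + 1) * a ^ m) * (a + 1) := by ring
          _ ≤ (a + 1) ^ (m + 1) * (a + 1) := Nat.mul_le_mul_right _ ih
          _ = (a + 1) ^ (m + 2) := by ring
    have hone : 1 ≤ a ^ (C * a) := Nat.one_le_pow _ _ ha
    have hp : 0 < a ^ (C * a + 1) := pow_pos ha _
    have hlt : C * a ^ (C * a + 1) < b ^ (C * a + 1) := by
      calc C * a ^ (C * a + 1)
          < a ^ (C * a + 1) + (C * a + 1) * a ^ (C * a) := by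
            have hexp : (C * a + 1) * a ^ (C * a) = C * a ^ (C * a + 1) + a ^ (C * a) := by ring
            linarith
        _ ≤ (a + 1) ^ (C * a + 1) := hbin (C * a)
        _ ≤ b ^ (C * a + 1) := Nat.pow_le_pow_left (by omega) _
    exact absurd (h (C * a + 1)) (not_le.mpr hlt)
lemma sharp [Fintype X] [Fintype B₁] [Fintype B₂]
    (g₁ : X → B₁) (g₂ : X → B₂) (e : ℕ) :
    Fintype.card X ^ (2 * e + 1) ≤
      (Fintype.card B₁ * Fintype.card B₂) ^ e *
        Nat.card {x : Fin (2 * e + 1) → X // AltChain g₁ g₂ e x} := by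
  apply le_of_forall_pow_le (C := 2 * 16 ^ e)
  intro N
  have h := crude (fun (v : Fin N → X) (j : Fin N) => g₁ (v j)) (fun (v : Fin N → X) (j : Fin N) => g₂ (v j)) e
  rw [altChain_pi_card] at h
  rw [Fintype.card_fun, Fintype.card_fun, Fintype.card_fun, Fintype.card_fin] at h
  calc (Fintype.card X ^ (2 * e + 1)) ^ N = (Fintype.card X ^ N) ^ (2 * e + 1) := by ring
    _ ≤ 2 * 16 ^ e * (Fintype.card B₁ ^ N * Fintype.card B₂ ^ N) ^ e *
        Nat.card {x : Fin (2 * e + 1) → X // AltChain g₁ g₂ e x} ^ N := h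
    _ = 2 * 16 ^ e * ((Fintype.card B₁ * Fintype.card B₂) ^ e *
        Nat.card {x : Fin (2 * e + 1) → X // AltChain g₁ g₂ e x}) ^ N := by ring

lemma card_evens (e : ℕ) : Fintype.card {i : Fin (2 * e + 1) // i.val % 2 = 0} = e + 1 := by
  have h : {i : Fin (2 * e + 1) // i.val % 2 = 0} ≃ Fin (e + 1) :=
    { toFun := fun i => ⟨i.1.val / 2, by have := i.1.isLt; have := i.2; omega⟩
      invFun := fun k => ⟨⟨2 * k.val, by have := k.isLt; omega⟩, by
        show 2 * k.val % 2 = 0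
        omega⟩
      left_inv := fun i => by
        ext
        have := i.2
        show 2 * (i.1.val / 2) = i.1.val
        omega
      right_inv := fun k => by
        ext
        show 2 * k.val / 2 = k.val
        omega }
  rw [Fintype.card_congr h, Fintype.card_fin]

end Aux

/-- Abstract counting statement for odd `n` and odd dimension `d = 2e + 1 ≥ 3`.
Here `A j` (for `j : Fin (m+1)`) plays the role of `A_{j+1}` and `f j` of `f_{j+1}`.
`𝒞` is the set of chains `(x₁,…,x_d) ∈ X^d` whose consecutive constraints alternate
between `f₁` (for odd `i`, i.e. `i.val` even in `0`-based indexing) and `f₂`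
(for even `i`).  The map `H` records the entries `(f_j(x_i))_{3 ≤ j ≤ m, 1 ≤ i ≤ d}`
together with `(f_{m+1}(x_i))` for the odd (1-based) indices `i`.  If `H` is injective,
then `|X|^d ≤ (|A₁|·|A₂|)^{(d-1)/2} · (∏_{j=3}^m |A_j|)^d · |A_{m+1}|^{(d+1)/2}`. -/
theorem counting_odd_n_odd_d {e m : ℕ} (he : 1 ≤ e) (hm : 2 ≤ m)
    {X : Type*} [Fintype X] (A : Fin (m + 1) → Type*) [∀ j, Fintype (A j)]
    (f : ∀ j : Fin (m + 1), X → A j)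
    (hH : Function.Injective
      (fun (x : {x : Fin (2 * e + 1) → X //
          ∀ i : Fin (2 * e),
            (i.val % 2 = 0 → f ⟨0, by omega⟩ (x i.castSucc) = f ⟨0, by omega⟩ (x i.succ)) ∧
            (i.val % 2 = 1 → f ⟨1, by omega⟩ (x i.castSucc) = f ⟨1, by omega⟩ (x i.succ))}) =>
        ((fun (i : Fin (2 * e + 1)) (j : {j : Fin (m + 1) // 2 ≤ j.val ∧ j.val < m}) =>
            f j.1 (x.1 i)),
         (fun (i : {i : Fin (2 * e + 1) // i.val % 2 = 0}) => f (Fin.last m) (x.1 i.1))))) :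
    Nat.card X ^ (2 * e + 1) ≤
      (Nat.card (A ⟨0, by omega⟩) * Nat.card (A ⟨1, by omega⟩)) ^ e *
        (∏ j ∈ Finset.univ.filter (fun j : Fin (m + 1) => 2 ≤ j.val ∧ j.val < m),
          Nat.card (A j)) ^ (2 * e + 1) *
        Nat.card (A (Fin.last m)) ^ (e + 1) := by
  classical
  have h0 : 0 < m + 1 := by omega
  have h1 : 1 < m + 1 := by omega
  set g₁ : X → A ⟨0, by omega⟩ := f ⟨0, by omega⟩ with hg₁
  set g₂ : X → A ⟨1, by omega⟩ := f ⟨1, by omega⟩ with hg₂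
  -- the chain subtype in `hH` is the `AltChain` subtype
  have hsharp := sharp g₁ g₂ e
  have hinj := Nat.card_le_card_of_injective _ hH
  -- compute the cardinality of the codomain of H
  have hP : Nat.card ((j : {j : Fin (m + 1) // 2 ≤ j.val ∧ j.val < m}) → A j.1)
      = ∏ j ∈ Finset.univ.filter (fun j : Fin (m + 1) => 2 ≤ j.val ∧ j.val < m),
          Nat.card (A j) := by
    rw [Nat.card_pi]
    exact (Finset.prod_subtype
      (Finset.univ.filter (fun j : Fin (m + 1) => 2 ≤ j.val ∧ j.val < m))
      (fun x => by simp) (fun j => Nat.card (A j))).symm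
  have hL : Nat.card ({i : Fin (2 * e + 1) // i.val % 2 = 0} → A (Fin.last m))
      = Nat.card (A (Fin.last m)) ^ (e + 1) := by
    rw [Nat.card_fun, Nat.card_eq_fintype_card (α := {i : Fin (2 * e + 1) // i.val % 2 = 0}),
      card_evens]
  have hcod : Nat.card ((Fin (2 * e + 1) →
        ((j : {j : Fin (m + 1) // 2 ≤ j.val ∧ j.val < m}) → A j.1)) ×
        ({i : Fin (2 * e + 1) // i.val % 2 = 0} → A (Fin.last m)))
      = (∏ j ∈ Finset.univ.filter (fun j : Fin (m + 1) => 2 ≤ j.val ∧ j.val < m),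
          Nat.card (A j)) ^ (2 * e + 1) * Nat.card (A (Fin.last m)) ^ (e + 1) := by
    rw [Nat.card_prod, Nat.card_fun, hP, hL, Nat.card_eq_fintype_card (α := Fin (2 * e + 1)),
      Fintype.card_fin]
  have hchain_eq : Nat.card {x : Fin (2 * e + 1) → X // AltChain g₁ g₂ e x}
      = Nat.card {x : Fin (2 * e + 1) → X //
          ∀ i : Fin (2 * e),
            (i.val % 2 = 0 → f ⟨0, h0⟩ (x i.castSucc) = f ⟨0, h0⟩ (x i.succ)) ∧
            (i.val % 2 = 1 → f ⟨1, h1⟩ (x i.castSucc) = f ⟨1, h1⟩ (x i.succ))} := rfl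
  have hle2 : Nat.card {x : Fin (2 * e + 1) → X // AltChain g₁ g₂ e x}
      ≤ (∏ j ∈ Finset.univ.filter (fun j : Fin (m + 1) => 2 ≤ j.val ∧ j.val < m),
          Nat.card (A j)) ^ (2 * e + 1) * Nat.card (A (Fin.last m)) ^ (e + 1) := by
    rw [hchain_eq]
    exact le_of_le_of_eq hinj hcod
  calc Nat.card X ^ (2 * e + 1)
      = Fintype.card X ^ (2 * e + 1) := by rw [Nat.card_eq_fintype_card]
    _ ≤ (Fintype.card (A ⟨0, h0⟩) * Fintype.card (A ⟨1, h1⟩)) ^ e *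
          Nat.card {x : Fin (2 * e + 1) → X // AltChain g₁ g₂ e x} := hsharp
    _ ≤ (Fintype.card (A ⟨0, h0⟩) * Fintype.card (A ⟨1, h1⟩)) ^ e *
          ((∏ j ∈ Finset.univ.filter (fun j : Fin (m + 1) => 2 ≤ j.val ∧ j.val < m),
            Nat.card (A j)) ^ (2 * e + 1) * Nat.card (A (Fin.last m)) ^ (e + 1)) :=
        Nat.mul_le_mul_left _ hle2
    _ = (Nat.card (A ⟨0, h0⟩) * Nat.card (A ⟨1, h1⟩)) ^ e *
        (∏ j ∈ Finset.univ.filter (fun j : Fin (m + 1) => 2 ≤ j.val ∧ j.val < m),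
          Nat.card (A j)) ^ (2 * e + 1) *
        Nat.card (A (Fin.last m)) ^ (e + 1) := by
      simp only [Nat.card_eq_fintype_card (α := A ⟨0, h0⟩), Nat.card_eq_fintype_card (α := A ⟨1, h1⟩), mul_assoc]
end

section
/- Let n ≥ 1 and 1 ≤ m ≤ n, let X and A₁, …, A_n be finite sets, and let f_i : X → A_i be functions for 1 ≤ i ≤ n. Suppose that for every subset S ⊆ {1,…,n} with |S| = m, the map x ↦ (f_i(x))_{i ∈ S} from X to ∏_{i∈S} A_i is injective. Then |X|^n ≤ (∏_{i=1}^{n} |A_i|)^m. -/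
lemma card_filter_mem_powersetCard {n m : ℕ} (hm1 : 1 ≤ m) (i : Fin n) :
    ((Finset.powersetCard m (Finset.univ : Finset (Fin n))).filter (fun S => i ∈ S)).card
      = Nat.choose (n - 1) (m - 1) := by
  have heq : ((Finset.powersetCard m (Finset.univ : Finset (Fin n))).filter (fun S => i ∈ S)).card
      = (Finset.powersetCard (m - 1) ((Finset.univ : Finset (Fin n)).erase i)).card := by
    apply Finset.card_bij (fun S _ => S.erase i)
    · intro S hS
      simp only [Finset.mem_filter, Finset.mem_powersetCard] at hS
      simp only [Finset.mem_powersetCard]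
      refine ⟨fun x hx => ?_, ?_⟩
      · simp only [Finset.mem_erase] at hx ⊢
        exact ⟨hx.1, Finset.mem_univ _⟩
      · rw [Finset.card_erase_of_mem hS.2, hS.1.2]
    · intro S hS T hT hST
      simp only [Finset.mem_filter] at hS hT
      have : insert i (S.erase i) = insert i (T.erase i) := by rw [hST]
      rwa [Finset.insert_erase hS.2, Finset.insert_erase hT.2] at this
    · intro T hT
      simp only [Finset.mem_powersetCard] at hT
      have hiT : i ∉ T := fun hi => (Finset.mem_erase.1 (hT.1 hi)).1 rfl
      refine ⟨insert i T, ?_, ?_⟩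
      · simp only [Finset.mem_filter, Finset.mem_powersetCard]
        refine ⟨⟨Finset.subset_univ _, ?_⟩, Finset.mem_insert_self _ _⟩
        rw [Finset.card_insert_of_notMem hiT, hT.2]
        omega
      · rw [Finset.erase_insert hiT]
  rw [heq, Finset.card_powersetCard, Finset.card_erase_of_mem (Finset.mem_univ i),
    Finset.card_univ, Fintype.card_fin]

/-- Single-scale rank-`m` counting heuristic: if `f i : X → A i` for `i : Fin n` are
such that for every `m`-element subset `S` of the indices the map
`x ↦ (f i x)_{i ∈ S}` is injective, then `|X|^n ≤ (∏ᵢ |Aᵢ|)^m`. -/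
theorem rank_m_counting {n m : ℕ} (hn : 1 ≤ n) (hm1 : 1 ≤ m) (hmn : m ≤ n)
    {X : Type*} [Fintype X] (A : Fin n → Type*) [∀ i, Fintype (A i)]
    (f : ∀ i : Fin n, X → A i)
    (h : ∀ S : Finset (Fin n), S.card = m →
      Function.Injective (fun (x : X) (i : {i // i ∈ S}) => f i.1 x)) :
    Nat.card X ^ n ≤ (∏ i, Nat.card (A i)) ^ m := by
  -- key bound for each m-subset
  have key : ∀ S : Finset (Fin n), S.card = m →
      Nat.card X ≤ ∏ i ∈ S, Nat.card (A i) := by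
    intro S hS
    calc Nat.card X ≤ Nat.card (∀ i : {i // i ∈ S}, A i.1) :=
          Nat.card_le_card_of_injective _ (h S hS)
      _ = ∏ i : {i // i ∈ S}, Nat.card (A i.1) := Nat.card_pi
      _ = ∏ i ∈ S, Nat.card (A i) := Finset.prod_coe_sort S (fun i => Nat.card (A i))
  set P := Finset.powersetCard m (Finset.univ : Finset (Fin n)) with hP
  have hPcard : P.card = Nat.choose n m := by
    rw [hP, Finset.card_powersetCard, Finset.card_univ, Fintype.card_fin]
  have step1 : Nat.card X ^ Nat.choose n m ≤ ∏ S ∈ P, ∏ i ∈ S, Nat.card (A i) := by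
    rw [← hPcard, ← Finset.prod_const]
    refine Finset.prod_le_prod' ?_
    intro S hS
    exact key S (Finset.mem_powersetCard.1 hS).2
  have step2 : ∏ S ∈ P, ∏ i ∈ S, Nat.card (A i)
      = (∏ i, Nat.card (A i)) ^ Nat.choose (n - 1) (m - 1) := by
    have : ∀ S ∈ P, ∏ i ∈ S, Nat.card (A i)
        = ∏ i, (if i ∈ S then Nat.card (A i) else 1) := by
      intro S hS
      rw [Finset.prod_ite_mem, Finset.univ_inter]
    rw [Finset.prod_congr rfl this, Finset.prod_comm]
    rw [← Finset.prod_pow]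
    refine Finset.prod_congr rfl fun i _ => ?_
    rw [Finset.prod_ite, Finset.prod_const, Finset.prod_const_one, mul_one,
      card_filter_mem_powersetCard hm1 i]
  -- combine
  have hC : 0 < Nat.choose (n - 1) (m - 1) := Nat.choose_pos (by omega)
  rw [← Nat.pow_le_pow_iff_left hC.ne']
  calc (Nat.card X ^ n) ^ Nat.choose (n - 1) (m - 1)
      = (Nat.card X ^ Nat.choose n m) ^ m := by
        rw [← pow_mul, ← pow_mul]
        congr 1
        have := Nat.add_one_mul_choose_eq (n - 1) (m - 1)
        have h1 : n - 1 + 1 = n := by omega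
        have h2 : m - 1 + 1 = m := by omega
        rw [h1, h2] at this
        omega
    _ ≤ ((∏ i, Nat.card (A i)) ^ Nat.choose (n - 1) (m - 1)) ^ m :=
        Nat.pow_le_pow_left (step2 ▸ step1) m
    _ = ((∏ i, Nat.card (A i)) ^ m) ^ Nat.choose (n - 1) (m - 1) := by
        rw [← pow_mul, ← pow_mul, Nat.mul_comm]
end

section
/- There exist a constant c > 0 and N₀ such that for every integer N ≥ N₀ and every integer n with N/100 ≤ n ≤ N, |∫₀¹ exp(2πi(N x² − n x)) dx| ≥ c N^{-1/2}. -/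
open intervalIntegral Complex

noncomputable def Fq (u : ℝ) : ℂ := Complex.exp (Complex.I * (u : ℂ) ^ 2)

lemma Fq_cont : Continuous Fq := by
  unfold Fq; fun_prop

lemma Fq_intble (a b : ℝ) : IntervalIntegrable Fq MeasureTheory.volume a b :=
  Fq_cont.intervalIntegrable a b

lemma Fq_norm (u : ℝ) : ‖Fq u‖ = 1 := by
  unfold Fq
  rw [show Complex.I * (u:ℂ)^2 = ((u^2 : ℝ) : ℂ) * Complex.I by push_cast; ring]
  exact Complex.norm_exp_ofReal_mul_I _

lemma Fq_neg (u : ℝ) : Fq (-u) = Fq u := by unfold Fq; push_cast; ring_nf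

lemma Fq_re (u : ℝ) : (Fq u).re = Real.cos (u^2) := by
  unfold Fq
  rw [show Complex.I * (u:ℂ)^2 = ((u^2 : ℝ) : ℂ) * Complex.I by push_cast; ring,
    Complex.exp_ofReal_mul_I_re]

lemma Fq_deriv_aux (u : ℝ) (hu : u ≠ 0) :
    HasDerivAt (fun v : ℝ => Complex.exp (Complex.I * (v:ℂ)^2) / (2 * Complex.I * (v:ℂ)))
      (Fq u + Fq u * Complex.I / (2 * (u:ℂ)^2)) u := by
  have huc : (u:ℂ) ≠ 0 := Complex.ofReal_ne_zero.mpr hu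
  have h0 : (2 * Complex.I * (u:ℂ)) ≠ 0 := by
    simp [Complex.I_ne_zero, huc]
  have hexp : HasDerivAt (fun z : ℂ => Complex.exp (Complex.I * z^2))
      (Complex.exp (Complex.I * (u:ℂ)^2) * (Complex.I * (2*(u:ℂ)))) (u:ℂ) := by
    have := ((hasDerivAt_pow 2 ((u:ℂ))).const_mul Complex.I).cexp
    simpa using this
  have hmulf : HasDerivAt (fun z : ℂ => 2 * Complex.I * z) (2*Complex.I) (u:ℂ) := by
    simpa using (hasDerivAt_id ((u:ℂ))).const_mul (2*Complex.I)
  have hinv : HasDerivAt (fun z : ℂ => (2 * Complex.I * z)⁻¹)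
      (-(2*Complex.I) / (2 * Complex.I * (u:ℂ))^2) (u:ℂ) := hmulf.inv h0
  have hmul := (hexp.mul hinv).comp_ofReal
  have heq : (fun v : ℝ => Complex.exp (Complex.I * (v:ℂ)^2) / (2 * Complex.I * (v:ℂ)))
      = fun v : ℝ => Complex.exp (Complex.I * (v:ℂ)^2) * (2 * Complex.I * (v:ℂ))⁻¹ := by
    funext v; rw [div_eq_mul_inv]
  rw [heq]
  convert hmul using 1
  · rfl
  unfold Fq
  field_simp
  ring_nf
  simp [pow_succ, Complex.I_mul_I]
  ring_nf

lemma inv_sq_integral {T B : ℝ} (hT : 0 < T) (hTB : T ≤ B) :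
    ∫ u in T..B, 1/(2*u^2) = 1/(2*T) - 1/(2*B) := by
  have hpos : ∀ u ∈ Set.uIcc T B, u ≠ 0 := by
    rw [Set.uIcc_of_le hTB]
    intro u hu
    exact ne_of_gt (lt_of_lt_of_le hT hu.1)
  have hderiv : ∀ u ∈ Set.uIcc T B, HasDerivAt (fun v : ℝ => -(1/(2*v))) (1/(2*u^2)) u := by
    intro u hu
    have hu0 := hpos u hu
    have h1 : HasDerivAt (fun v : ℝ => 2*v) 2 u := by
      simpa using (hasDerivAt_id u).const_mul (2:ℝ)
    have h2 := ((h1.inv (by simpa using hu0)).const_mul (1:ℝ)).neg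
    refine h2.congr_deriv ?_
    field_simp
  have hcont : ContinuousOn (fun u : ℝ => 1/(2*u^2)) (Set.uIcc T B) := by
    apply ContinuousOn.div continuousOn_const (by fun_prop)
    intro u hu
    have := hpos u hu
    positivity
  rw [intervalIntegral.integral_eq_sub_of_hasDerivAt hderiv hcont.intervalIntegrable]
  field_simp
  ring

lemma Fq_tail {T B : ℝ} (hT : 0 < T) (hTB : T ≤ B) : ‖∫ u in T..B, Fq u‖ ≤ 1/T := by
  have hB : 0 < B := lt_of_lt_of_le hT hTB
  set g : ℝ → ℂ := fun v => Complex.exp (Complex.I * (v:ℂ)^2) / (2 * Complex.I * (v:ℂ)) with hg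
  have hpos : ∀ u ∈ Set.uIcc T B, 0 < u := by
    rw [Set.uIcc_of_le hTB]
    exact fun u hu => lt_of_lt_of_le hT hu.1
  have hderiv : ∀ u ∈ Set.uIcc T B,
      HasDerivAt g (Fq u + Fq u * Complex.I / (2 * (u:ℂ)^2)) u :=
    fun u hu => Fq_deriv_aux u (ne_of_gt (hpos u hu))
  have hcont2 : ContinuousOn (fun u : ℝ => Fq u * Complex.I / (2 * (u:ℂ)^2)) (Set.uIcc T B) := by
    apply ContinuousOn.div (by exact (Fq_cont.continuousOn.mul continuousOn_const)) (by fun_prop)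
    intro u hu
    have hu0 : (u:ℂ) ≠ 0 := Complex.ofReal_ne_zero.mpr (ne_of_gt (hpos u hu))
    simp [hu0]
  have hint2 : IntervalIntegrable (fun u : ℝ => Fq u * Complex.I / (2 * (u:ℂ)^2))
      MeasureTheory.volume T B := hcont2.intervalIntegrable
  have hcont : ContinuousOn (fun u : ℝ => Fq u + Fq u * Complex.I / (2 * (u:ℂ)^2))
      (Set.uIcc T B) := Fq_cont.continuousOn.add hcont2
  have key := intervalIntegral.integral_eq_sub_of_hasDerivAt hderiv hcont.intervalIntegrable
  have split : ∫ u in T..B, Fq u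
      = (g B - g T) - ∫ u in T..B, Fq u * Complex.I / (2 * (u:ℂ)^2) := by
    rw [← key, intervalIntegral.integral_add (Fq_intble T B) hint2]
    ring
  have hnorm : ∀ v : ℝ, 0 < v → ‖g v‖ = 1/(2*v) := by
    intro v hv
    rw [hg]
    simp only [norm_div]
    rw [show ‖Complex.exp (Complex.I * (v:ℂ)^2)‖ = 1 from Fq_norm v]
    rw [norm_mul, norm_mul]
    simp [Complex.norm_real, abs_of_pos hv]
  have h3 : ‖∫ u in T..B, Fq u * Complex.I / (2 * (u:ℂ)^2)‖ ≤ 1/(2*T) - 1/(2*B) := by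
    have heq : ∫ u in T..B, ‖Fq u * Complex.I / (2 * (u:ℂ)^2)‖
        = ∫ u in T..B, 1/(2*u^2) := by
      apply intervalIntegral.integral_congr
      intro u hu
      have hu0 : (0:ℝ) < u := hpos u hu
      have hu0c : (u:ℂ) ≠ 0 := Complex.ofReal_ne_zero.mpr (ne_of_gt hu0)
      simp only [norm_div, norm_mul, Fq_norm, Complex.norm_I]
      rw [show ((u:ℂ)^2) = (((u^2 : ℝ)):ℂ) by push_cast; ring]
      simp [Complex.norm_real, abs_of_pos hu0, abs_of_pos (by positivity : (0:ℝ) < u^2)]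
    calc ‖∫ u in T..B, Fq u * Complex.I / (2 * (u:ℂ)^2)‖
        ≤ ∫ u in T..B, ‖Fq u * Complex.I / (2 * (u:ℂ)^2)‖ :=
          intervalIntegral.norm_integral_le_integral_norm hTB
      _ = 1/(2*T) - 1/(2*B) := by rw [heq, inv_sq_integral hT hTB]
  calc ‖∫ u in T..B, Fq u‖
      ≤ ‖g B - g T‖ + ‖∫ u in T..B, Fq u * Complex.I / (2 * (u:ℂ)^2)‖ := by
        rw [split]; exact norm_sub_le _ _
    _ ≤ (‖g B‖ + ‖g T‖) + (1/(2*T) - 1/(2*B)) :=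
        add_le_add (norm_sub_le _ _) h3
    _ = 1/T := by rw [hnorm B hB, hnorm T hT]; field_simp; ring

lemma Fq_center {T : ℝ} (hT : 0 ≤ T) : 2*T - T^5/5 ≤ (∫ u in (-T)..T, Fq u).re := by
  have hre : (∫ u in (-T)..T, Fq u).re = ∫ u in (-T)..T, Real.cos (u^2) := by
    rw [show (∫ u in (-T)..T, Fq u).re = Complex.reCLM (∫ u in (-T)..T, Fq u) from rfl,
      ← ContinuousLinearMap.intervalIntegral_comp_comm _ (Fq_intble _ _)]
    apply intervalIntegral.integral_congr
    intro u _
    exact Fq_re u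
  rw [hre]
  have hmono : ∫ u in (-T)..T, (1 - u^4/2 : ℝ) ≤ ∫ u in (-T)..T, Real.cos (u^2) := by
    apply intervalIntegral.integral_mono_on (by linarith)
    · exact (by fun_prop : Continuous fun u : ℝ => (1 - u^4/2 : ℝ)).intervalIntegrable _ _
    · exact (by fun_prop : Continuous fun u : ℝ => Real.cos (u^2)).intervalIntegrable _ _
    · intro u _
      have := Real.one_sub_sq_div_two_le_cos (x := u^2)
      nlinarith [this]
  have hval : ∫ u in (-T)..T, (1 - u^4/2 : ℝ) = 2*T - T^5/5 := by
    rw [intervalIntegral.integral_sub ((by fun_prop : Continuous fun _ : ℝ => (1:ℝ)).intervalIntegrable _ _)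
      ((by fun_prop : Continuous fun u : ℝ => (u^4/2 : ℝ)).intervalIntegrable _ _)]
    simp [intervalIntegral.integral_div, integral_pow]
    ring
  linarith

lemma Fq_main {A B : ℝ} (hA : 13/10 ≤ A) (hB : 13/10 ≤ B) :
    3/10 ≤ ‖∫ u in (-A)..B, Fq u‖ := by
  set T : ℝ := 13/10 with hTdef
  have hT : (0:ℝ) < T := by norm_num
  have split : ∫ u in (-A)..B, Fq u
      = ((∫ u in (-A)..(-T), Fq u) + (∫ u in (-T)..T, Fq u)) + ∫ u in T..B, Fq u := by
    rw [intervalIntegral.integral_add_adjacent_intervals (Fq_intble _ _) (Fq_intble _ _),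
      intervalIntegral.integral_add_adjacent_intervals (Fq_intble _ _) (Fq_intble _ _)]
  have hleft : ‖∫ u in (-A)..(-T), Fq u‖ ≤ 1/T := by
    have heq : (∫ u in (-A)..(-T), Fq u) = ∫ u in T..A, Fq u := by
      rw [← intervalIntegral.integral_comp_neg (a := T) (b := A) Fq]
      apply intervalIntegral.integral_congr
      intro u _
      exact Fq_neg u
    rw [heq]
    exact Fq_tail hT hA
  have hright : ‖∫ u in T..B, Fq u‖ ≤ 1/T := Fq_tail hT hB
  have hcen := Fq_center (le_of_lt hT)
  have hre : (3:ℝ)/10 ≤ (∫ u in (-A)..B, Fq u).re := by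
    rw [split]
    simp only [Complex.add_re]
    have h1 : -(1/T) ≤ (∫ u in (-A)..(-T), Fq u).re := by
      have := Complex.abs_re_le_norm (∫ u in (-A)..(-T), Fq u)
      have := abs_le.mp (le_trans this hleft)
      linarith [this.1]
    have h3 : -(1/T) ≤ (∫ u in T..B, Fq u).re := by
      have := Complex.abs_re_le_norm (∫ u in T..B, Fq u)
      have := abs_le.mp (le_trans this hright)
      linarith [this.1]
    have : 2*T - T^5/5 - 2*(1/T) ≥ 3/10 := by rw [hTdef]; norm_num
    linarith
  calc (3:ℝ)/10 ≤ (∫ u in (-A)..B, Fq u).re := hre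
    _ ≤ ‖∫ u in (-A)..B, Fq u‖ := by
        exact Complex.re_le_norm _

set_option maxHeartbeats 1000000 in
/-- Stationary-phase lower bound: there are `c > 0` and `N₀` such that for every integer
`N ≥ N₀` and every integer `n` with `N/100 ≤ n ≤ N`,
`|∫₀¹ e^{2πi(Nx² − nx)} dx| ≥ c N^{-1/2}`. -/
theorem quadratic_phase_lower_bound :
    ∃ c : ℝ, 0 < c ∧ ∃ N₀ : ℕ, ∀ N : ℕ, N₀ ≤ N → ∀ n : ℤ,
      (N : ℝ) / 100 ≤ (n : ℝ) → (n : ℝ) ≤ (N : ℝ) →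
      c * (N : ℝ) ^ (-(1/2) : ℝ) ≤
        ‖∫ x in (0:ℝ)..1,
            Complex.exp (2 * Real.pi * Complex.I * ((N : ℂ) * (x : ℂ) ^ 2 - (n : ℂ) * (x : ℂ)))‖ := by
  refine ⟨1/10, by norm_num, 20000, ?_⟩
  intro N hN n hn1 hn2
  have hNR : (20000:ℝ) ≤ (N:ℝ) := by exact_mod_cast hN
  have hNpos : (0:ℝ) < (N:ℝ) := by linarith
  have hπ := Real.pi_gt_three
  have hπ' := Real.pi_lt_d2
  set a : ℝ := (n:ℝ) / (2*(N:ℝ)) with ha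
  set s : ℝ := Real.sqrt (2*Real.pi*(N:ℝ)) with hs
  have hs2 : s^2 = 2*Real.pi*(N:ℝ) := Real.sq_sqrt (by positivity)
  have hspos : 0 < s := Real.sqrt_pos.mpr (by positivity)
  have hsge : (260:ℝ) ≤ s := by
    rw [hs]
    rw [show (260:ℝ) = Real.sqrt (260^2) from (Real.sqrt_sq (by norm_num)).symm]
    apply Real.sqrt_le_sqrt
    nlinarith
  have ha1 : 1/200 ≤ a := by
    rw [ha, le_div_iff₀ (by positivity)]
    linarith
  have ha2 : a ≤ 1/2 := by
    rw [ha, div_le_iff₀ (by positivity)]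
    linarith
  have hN0 : ((N:ℝ):ℂ) ≠ 0 := by exact_mod_cast ne_of_gt hNpos
  -- pointwise identity
  have key : ∀ x : ℝ,
      Complex.exp (2 * Real.pi * Complex.I * ((N : ℂ) * (x : ℂ) ^ 2 - (n : ℂ) * (x : ℂ)))
      = Complex.exp ((((-(2*Real.pi*(N:ℝ)*a^2)) : ℝ) : ℂ) * Complex.I) * Fq (s*x - s*a) := by
    intro x
    unfold Fq
    rw [← Complex.exp_add]
    congr 1
    have hsc : ((s:ℝ):ℂ)^2 = 2*(Real.pi:ℂ)*(N:ℂ) := by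
      rw [← Complex.ofReal_pow, hs2]
      push_cast
      ring
    have h2N : (2*((N:ℕ):ℂ)) ≠ 0 := by
      simp [Nat.cast_ne_zero]
      omega
    have hac : (a:ℂ) * (2*(N:ℂ)) = (n:ℂ) := by
      rw [ha]
      push_cast
      rw [div_mul_cancel₀ _ h2N]
    push_cast
    rw [show ((s:ℂ) * (x:ℂ) - (s:ℂ) * (a:ℂ))^2 = (s:ℂ)^2 * ((x:ℂ)-(a:ℂ))^2 by ring, hsc]
    rw [← hac]
    push_cast [Complex.ofReal_natCast]
    ring
  rw [intervalIntegral.integral_congr (fun x _ => key x)]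
  rw [intervalIntegral.integral_const_mul]
  rw [norm_mul, Complex.norm_exp_ofReal_mul_I, one_mul]
  rw [intervalIntegral.integral_comp_mul_sub Fq (ne_of_gt hspos) (s*a)]
  rw [norm_smul, Real.norm_eq_abs, abs_of_pos (by positivity : (0:ℝ) < s⁻¹)]
  have hbound : 3/10 ≤ ‖∫ u in (s*0 - s*a)..(s*1 - s*a), Fq u‖ := by
    have h1 : s*0 - s*a = -(s*a) := by ring
    have h2 : s*1 - s*a = s*(1-a) := by ring
    rw [h1, h2]
    apply Fq_main
    · nlinarith
    · nlinarith
  have hsqrtN : Real.sqrt (N:ℝ) > 0 := Real.sqrt_pos.mpr hNpos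
  have hrpow : (N:ℝ) ^ (-(1/2) : ℝ) = (Real.sqrt (N:ℝ))⁻¹ := by
    rw [Real.rpow_neg (le_of_lt hNpos), Real.sqrt_eq_rpow]
  rw [hrpow]
  have hs3 : s ≤ 3 * Real.sqrt (N:ℝ) := by
    rw [hs, show (3:ℝ) * Real.sqrt (N:ℝ) = Real.sqrt (9*(N:ℝ)) by
      rw [show (9:ℝ)*(N:ℝ) = 3^2*(N:ℝ) by norm_num, Real.sqrt_mul (by norm_num),
        Real.sqrt_sq (by norm_num)]]
    apply Real.sqrt_le_sqrt
    nlinarith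
  have hinv : (3 * Real.sqrt (N:ℝ))⁻¹ ≤ s⁻¹ := by
    apply inv_anti₀ hspos hs3
  calc (1/10 : ℝ) * (Real.sqrt (N:ℝ))⁻¹
      = (3 * Real.sqrt (N:ℝ))⁻¹ * (3/10) := by
        rw [mul_inv]
        ring
    _ ≤ s⁻¹ * (3/10) := by nlinarith [hinv]
    _ ≤ s⁻¹ * ‖∫ u in (s*0 - s*a)..(s*1 - s*a), Fq u‖ := by
        apply mul_le_mul_of_nonneg_left hbound (by positivity)
end

section
/- Let F₁ = F₂ = F₃ : [0,1] → ℂ be given by F_i(x) = exp(2πi N x²) and F₄(x) = exp(−2πi N x²), and let F̂_i(n) = ∫₀¹ F_i(x) e^{−2πi n x} dx denote their Fourier coefficients. Then there exist constants c > 0, C > 0 and N₀ such that for all integers N ≥ N₀: (a) the sum of ∏_{i=1}^{4} |F̂_i(n_i)| over all quadruples (n₁, n₂, n₃, n₄) ∈ ℤ⁴ with |n_i| ≤ 2N for each i, n₁ − n₂ + 2n₃ = 0 and n₁ + n₂ + n₃ + n₄ = 0, is at least c; and (b) sup_{n ∈ ℤ} |F̂_i(n)| ≤ C N^{-1/2}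 for each 1 ≤ i ≤ 4. Consequently the sum in (a) is not O(max_i ‖F̂_i‖_∞), and in fact is ≥ (c/C⁴) N² · ∏_{i=1}^4 ‖F̂_i‖_∞. -/
open intervalIntegral


/-- The `n`-th Fourier coefficient on `[0,1]` of the quadratic phase function
`x ↦ e^{2πi a x²}`, i.e. `F̂(n) = ∫₀¹ e^{2πi a x²} e^{−2πi n x} dx`. -/
noncomputable def quadFourierCoeff (a : ℝ) (n : ℤ) : ℂ :=
  ∫ x in (0:ℝ)..1,
    Complex.exp (2 * Real.pi * Complex.I * ((a : ℂ) * (x : ℂ) ^ 2 - (n : ℂ) * (x : ℂ)))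

/-- The quadruples `(n₁,n₂,n₃,n₄) ∈ ℤ⁴` with `|nᵢ| ≤ 2N` for each `i`, satisfying the
frequency constraints `n₁ − n₂ + 2n₃ = 0` and `n₁ + n₂ + n₃ + n₄ = 0` of the
trilinear Hilbert transform. -/
noncomputable def thtQuadruples (N : ℕ) : Finset (ℤ × ℤ × ℤ × ℤ) :=
  ((Finset.Icc (-(2 * (N : ℤ))) (2 * (N : ℤ))) ×ˢ (Finset.Icc (-(2 * (N : ℤ))) (2 * (N : ℤ))) ×ˢ
      (Finset.Icc (-(2 * (N : ℤ))) (2 * (N : ℤ))) ×ˢ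
      (Finset.Icc (-(2 * (N : ℤ))) (2 * (N : ℤ)))).filter
    (fun q => q.1 - q.2.1 + 2 * q.2.2.1 = 0 ∧ q.1 + q.2.1 + q.2.2.1 + q.2.2.2 = 0)

noncomputable def fres (v : ℝ) : ℂ := Complex.exp (2 * Real.pi * Complex.I * (v:ℂ) ^ 2)

lemma fres_cont : Continuous fres := by
  apply Complex.continuous_exp.comp
  continuity

lemma fres_norm (v : ℝ) : ‖fres v‖ = 1 := by
  rw [fres, Complex.norm_exp]
  have : (2 * (Real.pi:ℂ) * Complex.I * (v:ℂ) ^ 2).re = 0 := by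
    simp [Complex.mul_re, Complex.mul_im, ← Complex.ofReal_pow]
  rw [this, Real.exp_zero]

lemma fres_even (v : ℝ) : fres (-v) = fres v := by simp [fres]

lemma fres_intable (a b : ℝ) : IntervalIntegrable fres MeasureTheory.volume a b :=
  fres_cont.intervalIntegrable a b

noncomputable def fphi (v : ℝ) : ℂ := fres v * (4 * Real.pi * Complex.I * (v:ℂ))⁻¹

lemma fphi_deriv {v : ℝ} (hv : v ≠ 0) :
    HasDerivAt fphi (fres v - fres v * (4 * Real.pi * Complex.I * (v:ℂ)^2)⁻¹) v := by
  have hπ : (Real.pi : ℂ) ≠ 0 := by exact_mod_cast Real.pi_ne_zero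
  have hvC : (v:ℂ) ≠ 0 := by exact_mod_cast hv
  have h4 : (4 * Real.pi * Complex.I * (v:ℂ)) ≠ 0 := by
    simp [hπ, hvC, Complex.I_ne_zero]
  -- derivative of fres
  have hE : HasDerivAt (fun w : ℝ => fres w)
      (4 * Real.pi * Complex.I * (v:ℂ) * fres v) v := by
    have h1 : HasDerivAt (fun z : ℂ => Complex.exp (2 * Real.pi * Complex.I * z ^ 2))
        (Complex.exp (2 * Real.pi * Complex.I * (v:ℂ) ^ 2) *
          (2 * Real.pi * Complex.I * (2 * (v:ℂ)))) (v:ℂ) := by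
      have hz : HasDerivAt (fun z : ℂ => 2 * Real.pi * Complex.I * z ^ 2)
          (2 * Real.pi * Complex.I * (2 * (v:ℂ))) (v:ℂ) := by
        simpa using ((hasDerivAt_pow 2 ((v:ℂ))).const_mul (2 * Real.pi * Complex.I))
      simpa [mul_comm] using hz.cexp
    have := h1.comp_ofReal
    convert this using 1
    · rfl
    rw [fres]; ring
  have hI : HasDerivAt (fun w : ℝ => (4 * Real.pi * Complex.I * (w:ℂ))⁻¹)
      (-(4 * Real.pi * Complex.I) / (4 * Real.pi * Complex.I * (v:ℂ)) ^ 2) v := by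
    have h1 : HasDerivAt (fun z : ℂ => (4 * Real.pi * Complex.I * z)⁻¹)
        (-(4 * Real.pi * Complex.I) / (4 * Real.pi * Complex.I * (v:ℂ)) ^ 2) (v:ℂ) := by
      have hz : HasDerivAt (fun z : ℂ => 4 * Real.pi * Complex.I * z)
          (4 * Real.pi * Complex.I) (v:ℂ) := by
        simpa using (hasDerivAt_id ((v:ℂ))).const_mul (4 * Real.pi * Complex.I)
      exact hz.inv h4
    exact h1.comp_ofReal
  have := hE.mul hI
  convert this using 1
  · rfl
  · rfl
  field_simp
  ring

lemma fres_aux_norm (x : ℝ) :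
    ‖fres x * (4 * Real.pi * Complex.I * (x:ℂ)^2)⁻¹‖ = (4 * Real.pi * x^2)⁻¹ := by
  rw [norm_mul, fres_norm, one_mul, norm_inv]
  congr 1
  rw [show (4 * Real.pi * Complex.I * (x:ℂ)^2) = ((4 * Real.pi * x^2 : ℝ) : ℂ) * Complex.I by
    push_cast; ring]
  rw [norm_mul, Complex.norm_I, mul_one, Complex.norm_real, Real.norm_eq_abs,
    abs_of_nonneg (by positivity)]

lemma fphi_norm {v : ℝ} (hv : 0 ≤ v) : ‖fphi v‖ = (4 * Real.pi * v)⁻¹ := by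
  rw [fphi, norm_mul, fres_norm, one_mul, norm_inv]
  congr 1
  rw [show (4 * Real.pi * Complex.I * (v:ℂ)) = ((4 * Real.pi * v : ℝ) : ℂ) * Complex.I by
    push_cast; ring]
  rw [norm_mul, Complex.norm_I, mul_one, Complex.norm_real, Real.norm_eq_abs,
    abs_of_nonneg (by positivity)]

lemma fres_tail {a b : ℝ} (ha : 1/2 ≤ a) (hab : a ≤ b) :
    ‖∫ v in a..b, fres v‖ ≤ 1 / Real.pi := by
  have ha0 : 0 < a := by linarith
  have hpos : ∀ x ∈ Set.uIcc a b, x ≠ 0 := by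
    intro x hx
    rw [Set.uIcc_of_le hab] at hx
    have : (0:ℝ) < x := lt_of_lt_of_le ha0 hx.1
    exact ne_of_gt this
  have hcont2 : ContinuousOn (fun x : ℝ => fres x * (4 * Real.pi * Complex.I * (x:ℂ)^2)⁻¹)
      (Set.uIcc a b) := by
    apply (fres_cont.continuousOn).mul
    apply ContinuousOn.inv₀
    · fun_prop
    · intro x hx
      have hx0 : (x:ℂ) ≠ 0 := by exact_mod_cast hpos x hx
      simp [Complex.I_ne_zero, Complex.ofReal_ne_zero.mpr Real.pi_ne_zero, hx0]
  have hint2 : IntervalIntegrable (fun x : ℝ => fres x * (4 * Real.pi * Complex.I * (x:ℂ)^2)⁻¹)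
      MeasureTheory.volume a b := hcont2.intervalIntegrable
  have hderiv : ∀ x ∈ Set.uIcc a b, HasDerivAt fphi
      (fres x - fres x * (4 * Real.pi * Complex.I * (x:ℂ)^2)⁻¹) x :=
    fun x hx => fphi_deriv (hpos x hx)
  have hFTC : ∫ x in a..b, (fres x - fres x * (4 * Real.pi * Complex.I * (x:ℂ)^2)⁻¹)
      = fphi b - fphi a :=
    integral_eq_sub_of_hasDerivAt hderiv ((fres_intable a b).sub hint2)
  have hsplit : (∫ v in a..b, fres v) = (fphi b - fphi a)
      + ∫ x in a..b, fres x * (4 * Real.pi * Complex.I * (x:ℂ)^2)⁻¹ := by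
    rw [← hFTC, ← intervalIntegral.integral_add ((fres_intable a b).sub hint2) hint2]
    simp
  rw [hsplit]
  have hπ : (0:ℝ) < Real.pi := Real.pi_pos
  have hb0 : 0 < b := lt_of_lt_of_le ha0 hab
  have h1 : ‖fphi b - fphi a‖ ≤ (4 * Real.pi * b)⁻¹ + (4 * Real.pi * a)⁻¹ := by
    calc ‖fphi b - fphi a‖ ≤ ‖fphi b‖ + ‖fphi a‖ := norm_sub_le _ _
    _ = (4 * Real.pi * b)⁻¹ + (4 * Real.pi * a)⁻¹ := by
        rw [fphi_norm hb0.le, fphi_norm ha0.le]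
  have h2 : ‖∫ x in a..b, fres x * (4 * Real.pi * Complex.I * (x:ℂ)^2)⁻¹‖
      ≤ (4 * Real.pi)⁻¹ * (a⁻¹ - b⁻¹) := by
    calc ‖∫ x in a..b, fres x * (4 * Real.pi * Complex.I * (x:ℂ)^2)⁻¹‖
        ≤ ∫ x in a..b, ‖fres x * (4 * Real.pi * Complex.I * (x:ℂ)^2)⁻¹‖ :=
          intervalIntegral.norm_integral_le_integral_norm hab
      _ = ∫ x in a..b, (4 * Real.pi)⁻¹ * (x^(-2:ℤ)) := by
          apply intervalIntegral.integral_congr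
          intro x hx
          have hx0 : x ≠ 0 := hpos x hx
          simp only [fres_aux_norm, zpow_neg]
          rw [mul_inv]
          norm_cast
      _ = (4 * Real.pi)⁻¹ * ∫ x in a..b, (x^(-2:ℤ)) := intervalIntegral.integral_const_mul _ _
      _ = (4 * Real.pi)⁻¹ * (a⁻¹ - b⁻¹) := by
          rw [integral_zpow]
          · norm_num
            ring
          · right
            refine ⟨by norm_num, fun h => (hpos 0 h) rfl⟩
  calc ‖(fphi b - fphi a) + _‖ ≤ ‖fphi b - fphi a‖ + _ := norm_add_le _ _
    _ ≤ ((4 * Real.pi * b)⁻¹ + (4 * Real.pi * a)⁻¹) + (4 * Real.pi)⁻¹ * (a⁻¹ - b⁻¹) :=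
        add_le_add h1 h2
    _ = (2 * Real.pi * a)⁻¹ := by field_simp; ring
    _ ≤ 1 / Real.pi := by
        rw [one_div, mul_inv, mul_inv]
        have : a⁻¹ ≤ 2 := by
          rw [inv_le_comm₀ ha0 (by norm_num)]; linarith
        calc (2:ℝ)⁻¹ * Real.pi⁻¹ * a⁻¹ ≤ (2:ℝ)⁻¹ * Real.pi⁻¹ * 2 :=
              by apply mul_le_mul_of_nonneg_left this (by positivity)
          _ = Real.pi⁻¹ := by ring

lemma fres_int_neg (b : ℝ) : (∫ v in (0:ℝ)..(-b), fres v) = - ∫ v in (0:ℝ)..b, fres v := by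
  have h1 : (∫ v in (0:ℝ)..(-b), fres v) = ∫ v in (0:ℝ)..(-b), fres (-v) := by
    simp [fres_even]
  rw [h1, intervalIntegral.integral_comp_neg fres]
  simp only [neg_neg, neg_zero]
  exact intervalIntegral.integral_symm 0 b

lemma fres_half_bound : ‖∫ v in (0:ℝ)..(1/2:ℝ), fres v‖ ≤ 1/2 := by
  have h := intervalIntegral.norm_integral_le_of_norm_le_const
    (C := 1) (a := (0:ℝ)) (b := (1/2:ℝ)) (f := fres) (fun x _ => le_of_eq (fres_norm x))
  calc ‖∫ v in (0:ℝ)..(1/2:ℝ), fres v‖ ≤ 1 * |(1/2:ℝ) - 0| := h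
    _ ≤ 1/2 := by rw [abs_of_nonneg (by norm_num)]; norm_num

lemma fres_g_bound (b : ℝ) : ‖∫ v in (0:ℝ)..b, fres v‖ ≤ 1 := by
  have key : ∀ c : ℝ, 0 ≤ c → ‖∫ v in (0:ℝ)..c, fres v‖ ≤ 1 := by
    intro c hc
    by_cases h : c ≤ 1/2
    · have := intervalIntegral.norm_integral_le_of_norm_le_const
        (C := 1) (a := (0:ℝ)) (b := c) (f := fres) (fun x _ => le_of_eq (fres_norm x))
      calc ‖∫ v in (0:ℝ)..c, fres v‖ ≤ 1 * |c - 0| := this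
        _ ≤ 1 := by rw [abs_of_nonneg (by linarith)]; linarith
    · push_neg at h
      rw [← intervalIntegral.integral_add_adjacent_intervals (b := 1/2)
        (fres_intable 0 (1/2)) (fres_intable (1/2) c)]
      have h1 := fres_half_bound
      have h2 := fres_tail (le_refl (1/2:ℝ)) h.le
      have hπ := Real.pi_gt_three
      have h3 : 1/Real.pi ≤ 1/2 := by
        rw [div_le_div_iff₀ (by linarith) (by norm_num)]; linarith
      calc ‖_ + _‖ ≤ ‖∫ v in (0:ℝ)..(1/2:ℝ), fres v‖ + ‖∫ v in (1/2:ℝ)..c, fres v‖ :=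
            norm_add_le _ _
        _ ≤ 1 := by linarith
  rcases le_or_gt 0 b with hb | hb
  · exact key b hb
  · have hb' : b = -(-b) := by ring
    rw [hb', fres_int_neg, norm_neg]
    exact key (-b) (by linarith)

lemma fres_seg_bound (a b : ℝ) : ‖∫ v in a..b, fres v‖ ≤ 2 := by
  rw [← intervalIntegral.integral_add_adjacent_intervals (b := 0)
    (fres_intable a 0) (fres_intable 0 b)]
  have h1 : ‖∫ v in a..(0:ℝ), fres v‖ ≤ 1 := by
    rw [intervalIntegral.integral_symm, norm_neg]
    exact fres_g_bound a
  have h2 := fres_g_bound b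
  calc ‖_ + _‖ ≤ ‖∫ v in a..(0:ℝ), fres v‖ + ‖∫ v in (0:ℝ)..b, fres v‖ := norm_add_le _ _
    _ ≤ 2 := by linarith

lemma fres_re (v : ℝ) : (fres v).re = Real.cos (2 * Real.pi * v ^ 2) := by
  rw [fres, show (2 * ↑Real.pi * Complex.I * (v:ℂ) ^ 2)
    = ((2 * Real.pi * v ^ 2 : ℝ) : ℂ) * Complex.I by push_cast; ring]
  exact Complex.exp_ofReal_mul_I_re _

lemma fres_mid_re : (3:ℝ)/4 ≤ (∫ v in (-(1/2):ℝ)..(1/2:ℝ), fres v).re := by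
  have hab : (-(1/2):ℝ) ≤ 1/2 := by norm_num
  have hre : (∫ v in (-(1/2):ℝ)..(1/2:ℝ), fres v).re
      = ∫ v in (-(1/2):ℝ)..(1/2:ℝ), Real.cos (2 * Real.pi * v ^ 2) := by
    rw [intervalIntegral.integral_of_le hab, intervalIntegral.integral_of_le hab]
    have hint : MeasureTheory.Integrable fres
        (MeasureTheory.volume.restrict (Set.Ioc (-(1/2):ℝ) (1/2:ℝ))) := by
      have := (fres_intable (-(1/2)) (1/2))
      rwa [intervalIntegrable_iff, Set.uIoc_of_le hab] at this
    rw [show Complex.re = RCLike.re by rfl, ← integral_re hint]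
    apply MeasureTheory.integral_congr_ae
    filter_upwards with v
    exact fres_re v
  rw [hre]
  have hmono : (∫ v in (-(1/2):ℝ)..(1/2:ℝ), (1 - 2 * Real.pi ^ 2 * v ^ 4))
      ≤ ∫ v in (-(1/2):ℝ)..(1/2:ℝ), Real.cos (2 * Real.pi * v ^ 2) := by
    apply intervalIntegral.integral_mono_on hab
    · apply Continuous.intervalIntegrable; continuity
    · apply Continuous.intervalIntegrable; continuity
    · intro x _
      have := Real.one_sub_sq_div_two_le_cos (x := 2 * Real.pi * x ^ 2)
      calc 1 - 2 * Real.pi ^ 2 * x ^ 4 = 1 - (2 * Real.pi * x ^ 2) ^ 2 / 2 := by ring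
        _ ≤ Real.cos (2 * Real.pi * x ^ 2) := this
  have hval : (∫ v in (-(1/2):ℝ)..(1/2:ℝ), (1 - 2 * Real.pi ^ 2 * v ^ 4))
      = 1 - Real.pi ^ 2 / 40 := by
    rw [intervalIntegral.integral_sub (by apply Continuous.intervalIntegrable; continuity)
      (by apply Continuous.intervalIntegrable; continuity)]
    rw [intervalIntegral.integral_const, intervalIntegral.integral_const_mul,
      integral_pow]
    norm_num
    ring
  have hπ : Real.pi < 3.15 := Real.pi_lt_d2
  have hπ0 : 0 < Real.pi := Real.pi_pos
  nlinarith [hmono, hval]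

lemma fres_main {a b : ℝ} (ha : a ≤ -(1/2)) (hb : (1/2:ℝ) ≤ b) :
    (1:ℝ)/10 ≤ ‖∫ v in a..b, fres v‖ := by
  have hsplit : (∫ v in a..b, fres v) = (∫ v in a..(-(1/2):ℝ), fres v)
      + (∫ v in (-(1/2):ℝ)..(1/2:ℝ), fres v) + (∫ v in (1/2:ℝ)..b, fres v) := by
    rw [intervalIntegral.integral_add_adjacent_intervals (fres_intable a (-(1/2)))
      (fres_intable (-(1/2)) (1/2)),
      intervalIntegral.integral_add_adjacent_intervals (fres_intable a (1/2))
      (fres_intable (1/2) b)]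
  have ht2 : ‖∫ v in (1/2:ℝ)..b, fres v‖ ≤ 1/Real.pi := fres_tail le_rfl hb
  have ht1 : ‖∫ v in a..(-(1/2):ℝ), fres v‖ ≤ 1/Real.pi := by
    have h1 : (∫ v in a..(-(1/2):ℝ), fres v) = ∫ v in a..(-(1/2):ℝ), fres (-v) := by
      simp [fres_even]
    rw [h1, intervalIntegral.integral_comp_neg fres]
    exact fres_tail (by norm_num) (by linarith)
  have hmid := fres_mid_re
  have hre : (∫ v in a..b, fres v).re ≤ ‖∫ v in a..b, fres v‖ := Complex.re_le_norm _
  have h1 : |(∫ v in a..(-(1/2):ℝ), fres v).re| ≤ 1/Real.pi :=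
    le_trans (Complex.abs_re_le_norm _) ht1
  have h2 : |(∫ v in (1/2:ℝ)..b, fres v).re| ≤ 1/Real.pi :=
    le_trans (Complex.abs_re_le_norm _) ht2
  have hπ : 3.14 < Real.pi := Real.pi_gt_d2
  have hπinv : 1/Real.pi ≤ 1/3.14 := by
    apply div_le_div_of_nonneg_left (by norm_num) (by norm_num) hπ.le
  have habs1 := abs_le.mp h1
  have habs2 := abs_le.mp h2
  have hresum : (∫ v in a..b, fres v).re
      = (∫ v in a..(-(1/2):ℝ), fres v).re + (∫ v in (-(1/2):ℝ)..(1/2:ℝ), fres v).re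
        + (∫ v in (1/2:ℝ)..b, fres v).re := by
    rw [hsplit]; simp [Complex.add_re]
  have : (1:ℝ)/10 ≤ (∫ v in a..b, fres v).re := by
    rw [hresum]
    have : (1:ℝ)/3.14 ≤ 13/40 := by norm_num
    linarith
  linarith

lemma quad_norm {t : ℝ} (ht : 0 < t) (n : ℤ) :
    ‖quadFourierCoeff t n‖ = (Real.sqrt t)⁻¹ *
      ‖∫ v in (-((n:ℝ)/(2*t)) * Real.sqrt t)..((1 - (n:ℝ)/(2*t)) * Real.sqrt t), fres v‖ := by
  set x₀ : ℝ := (n:ℝ)/(2*t) with hx₀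
  have ht' : (t:ℝ) ≠ 0 := ne_of_gt ht
  have hs : Real.sqrt t ≠ 0 := by positivity
  have step1 : quadFourierCoeff t n
      = Complex.exp (((-(2*Real.pi*t*x₀^2) : ℝ):ℂ) * Complex.I)
        * ∫ x in (0:ℝ)..1, Complex.exp (2*Real.pi*Complex.I*((t:ℂ)*((x:ℂ)-(x₀:ℂ))^2)) := by
    rw [quadFourierCoeff, ← intervalIntegral.integral_const_mul]
    apply intervalIntegral.integral_congr
    intro x _
    simp only
    rw [← Complex.exp_add]
    congr 1
    have hn : (n:ℂ) = 2*(t:ℂ)*(x₀:ℂ) := by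
      have h2t : (2*(t:ℂ)) ≠ 0 := by
        simp [Complex.ofReal_ne_zero.mpr ht']
      rw [hx₀]; push_cast
      rw [mul_div_assoc']
      exact (mul_div_cancel_left₀ _ h2t).symm
    rw [hn]; push_cast; ring
  have step2 : (∫ x in (0:ℝ)..1, Complex.exp (2*Real.pi*Complex.I*((t:ℂ)*((x:ℂ)-(x₀:ℂ))^2)))
      = ∫ u in (-x₀)..(1-x₀), Complex.exp (2*Real.pi*Complex.I*((t:ℂ)*(u:ℂ)^2)) := by
    have := intervalIntegral.integral_comp_sub_right
      (fun u : ℝ => Complex.exp (2*Real.pi*Complex.I*((t:ℂ)*(u:ℂ)^2))) x₀ (a := 0) (b := 1)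
    rw [show (-x₀ : ℝ) = 0 - x₀ by ring, ← this]
    apply intervalIntegral.integral_congr
    intro x _
    simp only
    push_cast
    ring_nf
  have step3 : (∫ u in (-x₀)..(1-x₀), Complex.exp (2*Real.pi*Complex.I*((t:ℂ)*(u:ℂ)^2)))
      = (Real.sqrt t)⁻¹ • ∫ v in (-x₀ * Real.sqrt t)..((1-x₀) * Real.sqrt t), fres v := by
    rw [← intervalIntegral.integral_comp_mul_right fres hs]
    apply intervalIntegral.integral_congr
    intro u _
    simp only [fres]
    congr 2
    have : ((u * Real.sqrt t : ℝ):ℂ)^2 = ((u^2 * t : ℝ):ℂ) := by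
      rw [← Complex.ofReal_pow]
      congr 1
      rw [mul_pow, Real.sq_sqrt ht.le]
    rw [this]
    push_cast
    ring
  rw [step1, step2, step3, norm_mul, Complex.norm_exp_ofReal_mul_I,
    one_mul, norm_smul, Real.norm_eq_abs, abs_of_nonneg (by positivity)]

lemma intervalIntegral_conj {f : ℝ → ℂ} {a b : ℝ} :
    ∫ x in a..b, (starRingEnd ℂ) (f x) = (starRingEnd ℂ) (∫ x in a..b, f x) := by
  rw [intervalIntegral, intervalIntegral, integral_conj, integral_conj, ← map_sub]

lemma quad_neg (a : ℝ) (n : ℤ) :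
    quadFourierCoeff (-a) n = (starRingEnd ℂ) (quadFourierCoeff a (-n)) := by
  rw [quadFourierCoeff, quadFourierCoeff, ← intervalIntegral_conj]
  apply intervalIntegral.integral_congr
  intro x _
  simp only
  rw [← Complex.exp_conj]
  congr 1
  simp [Complex.conj_ofReal, map_ofNat]
  push_cast
  ring

lemma sqrt_inv_rpow {N : ℕ} (hN : 1 ≤ N) :
    ((N:ℝ))^(-(1/2):ℝ) = (Real.sqrt N)⁻¹ := by
  have hN0 : (0:ℝ) ≤ N := by positivity
  rw [Real.rpow_neg hN0, Real.sqrt_eq_rpow]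

lemma quad_upper {N : ℕ} (hN : 1 ≤ N) (n : ℤ) :
    ‖quadFourierCoeff (N:ℝ) n‖ ≤ 2 * ((N:ℝ))^(-(1/2):ℝ) := by
  have hN0 : (0:ℝ) < N := by exact_mod_cast hN
  rw [quad_norm hN0 n, sqrt_inv_rpow hN, mul_comm (2:ℝ) ((Real.sqrt N)⁻¹)]
  exact mul_le_mul_of_nonneg_left (fres_seg_bound _ _) (by positivity)

lemma quad_neg_norm (a : ℝ) (n : ℤ) :
    ‖quadFourierCoeff (-a) n‖ = ‖quadFourierCoeff a (-n)‖ := by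
  rw [quad_neg, RCLike.norm_conj]

lemma quad_lower {N : ℕ} {m : ℤ} (hN : 64 ≤ N) (h1 : (N:ℤ) ≤ 8*m) (h2 : 8*m ≤ 15*(N:ℤ)) :
    (1/10 : ℝ) * (Real.sqrt N)⁻¹ ≤ ‖quadFourierCoeff (N:ℝ) m‖ := by
  have hN0 : (0:ℝ) < N := by
    have : (0:ℕ) < N := by omega
    exact_mod_cast this
  have h1' : (N:ℝ) ≤ 8*(m:ℝ) := by exact_mod_cast h1
  have h2' : 8*(m:ℝ) ≤ 15*(N:ℝ) := by exact_mod_cast h2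
  have h64 : (64:ℝ) ≤ N := by exact_mod_cast hN
  have h8 : (8:ℝ) ≤ Real.sqrt N := by
    rw [show (8:ℝ) = Real.sqrt 64 by
      rw [show (64:ℝ) = 8^2 by norm_num, Real.sqrt_sq (by norm_num)]]
    exact Real.sqrt_le_sqrt h64
  set x₀ : ℝ := (m:ℝ)/(2*N) with hx₀
  have hx1 : (1:ℝ)/16 ≤ x₀ := by
    rw [hx₀, div_le_div_iff₀ (by norm_num) (by positivity)]
    linarith
  have hx2 : x₀ ≤ 15/16 := by
    rw [hx₀, div_le_div_iff₀ (by positivity) (by norm_num)]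
    linarith
  have ha : -x₀ * Real.sqrt N ≤ -(1/2) := by nlinarith
  have hb : (1/2:ℝ) ≤ (1 - x₀) * Real.sqrt N := by nlinarith
  rw [quad_norm hN0 m]
  have := fres_main (a := -x₀ * Real.sqrt N) (b := (1 - x₀) * Real.sqrt N)
    (by linarith) hb
  calc (1/10 : ℝ) * (Real.sqrt N)⁻¹ = (Real.sqrt N)⁻¹ * (1/10) := by ring
    _ ≤ (Real.sqrt N)⁻¹ *
        ‖∫ v in (-x₀ * Real.sqrt N)..((1 - x₀) * Real.sqrt N), fres v‖ := by
        apply mul_le_mul_of_nonneg_left _ (by positivity)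
        simpa using this
    _ = (Real.sqrt N)⁻¹ *
        ‖∫ v in (-((m:ℝ)/(2*(N:ℝ))) * Real.sqrt N)..((1 - (m:ℝ)/(2*(N:ℝ))) * Real.sqrt N),
          fres v‖ := by rw [hx₀]

lemma sum_lower {N : ℕ} (hN : 64 ≤ N) :
    (1/10240000 : ℝ) ≤ ∑ q ∈ thtQuadruples N,
      ‖quadFourierCoeff (N : ℝ) q.1‖ * ‖quadFourierCoeff (N : ℝ) q.2.1‖ *
        ‖quadFourierCoeff (N : ℝ) q.2.2.1‖ * ‖quadFourierCoeff (-(N : ℝ)) q.2.2.2‖ := by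
  have hN0 : (0:ℝ) < N := by
    have : (0:ℕ) < N := by omega
    exact_mod_cast this
  set K : ℤ := (N:ℤ)/16 with hK
  have hK1 : 16*K ≤ (N:ℤ) ∧ (N:ℤ) < 16*K + 16 ∧ 4 ≤ K := by omega
  set P : Finset (ℤ × ℤ) := Finset.Icc 0 (K-1) ×ˢ Finset.Icc 0 (K-1) with hP
  set f : ℤ × ℤ → ℤ × ℤ × ℤ × ℤ :=
    fun p => (4*K + p.1 - 2*p.2, 12*K + p.1, 4*K + p.2, -(20*K + 2*p.1 - p.2)) with hf
  set term : ℤ × ℤ × ℤ × ℤ → ℝ := fun q =>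
    ‖quadFourierCoeff (N : ℝ) q.1‖ * ‖quadFourierCoeff (N : ℝ) q.2.1‖ *
      ‖quadFourierCoeff (N : ℝ) q.2.2.1‖ * ‖quadFourierCoeff (-(N : ℝ)) q.2.2.2‖ with hterm
  have hmem : ∀ p ∈ P, f p ∈ thtQuadruples N := by
    intro p hp
    simp only [hP, Finset.mem_product, Finset.mem_Icc] at hp
    simp only [hf, thtQuadruples, Finset.mem_filter, Finset.mem_product, Finset.mem_Icc]
    refine ⟨⟨⟨?_, ?_⟩, ⟨?_, ?_⟩, ⟨?_, ?_⟩, ⟨?_, ?_⟩⟩, by ring, by ring⟩ <;> omega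
  have hinj : ∀ p ∈ P, ∀ p' ∈ P, f p = f p' → p = p' := by
    intro p _ p' _ h
    simp only [hf, Prod.mk.injEq] at h
    obtain ⟨_, h2, h3, _⟩ := h
    exact Prod.ext (by omega) (by omega)
  have hlow : ∀ p ∈ P, ((1/10:ℝ) * (Real.sqrt N)⁻¹)^4 ≤ term (f p) := by
    intro p hp
    simp only [hP, Finset.mem_product, Finset.mem_Icc] at hp
    have h1 := quad_lower (m := 4*K + p.1 - 2*p.2) hN (by omega) (by omega)
    have h2 := quad_lower (m := 12*K + p.1) hN (by omega) (by omega)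
    have h3 := quad_lower (m := 4*K + p.2) hN (by omega) (by omega)
    have h4' := quad_lower (m := 20*K + 2*p.1 - p.2) hN (by omega) (by omega)
    have h4 : (1/10 : ℝ) * (Real.sqrt N)⁻¹
        ≤ ‖quadFourierCoeff (-(N:ℝ)) (-(20*K + 2*p.1 - p.2))‖ := by
      rw [quad_neg_norm, neg_neg]
      exact h4'
    have hc0 : (0:ℝ) ≤ (1/10:ℝ) * (Real.sqrt N)⁻¹ := by positivity
    simp only [hterm, hf]
    calc ((1/10:ℝ) * (Real.sqrt N)⁻¹)^4
        = ((1/10:ℝ) * (Real.sqrt N)⁻¹) * ((1/10:ℝ) * (Real.sqrt N)⁻¹)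
          * ((1/10:ℝ) * (Real.sqrt N)⁻¹) * ((1/10:ℝ) * (Real.sqrt N)⁻¹) := by ring
      _ ≤ _ := by
          apply mul_le_mul (mul_le_mul (mul_le_mul h1 h2 hc0 (norm_nonneg _)) h3 hc0
            (mul_nonneg (norm_nonneg _) (norm_nonneg _))) h4 hc0
            (mul_nonneg (mul_nonneg (norm_nonneg _) (norm_nonneg _)) (norm_nonneg _))
  have hcard : (P.card : ℝ) = ((K.toNat : ℝ))^2 := by
    simp only [hP, Finset.card_product, Int.card_Icc]
    have : (K - 1 + 1 - 0).toNat = K.toNat := by omega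
    rw [this]
    push_cast
    ring
  have hs2 : (Real.sqrt N)^2 = (N:ℝ) := Real.sq_sqrt hN0.le
  have hc4 : ((1/10:ℝ) * (Real.sqrt N)⁻¹)^4 = (1/10000) * (((N:ℝ)^2))⁻¹ := by
    have h4 : ((1/10:ℝ) * (Real.sqrt N)⁻¹)^4 = (1/10000) * ((((Real.sqrt N)^2)^2))⁻¹ := by
      field_simp
      nlinarith [hs2, hN0]
    rw [h4, hs2]
  have hKN : (N:ℝ) ≤ 32 * ((K.toNat : ℝ)) := by
    have : (N:ℤ) ≤ 32 * K.toNat := by omega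
    exact_mod_cast this
  calc (1/10240000 : ℝ)
      ≤ (P.card : ℝ) * ((1/10:ℝ) * (Real.sqrt N)⁻¹)^4 := by
        rw [hcard, hc4]
        have upos : (0:ℝ) < ((N:ℝ)^2)⁻¹ := by positivity
        have hu : (N:ℝ)^2 * ((N:ℝ)^2)⁻¹ = 1 := mul_inv_cancel₀ (by positivity)
        have hN2 : (N:ℝ)^2 ≤ 1024 * ((K.toNat:ℝ))^2 := by nlinarith
        nlinarith [mul_le_mul_of_nonneg_right hN2 upos.le]
    _ = ∑ _p ∈ P, ((1/10:ℝ) * (Real.sqrt N)⁻¹)^4 := by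
        rw [Finset.sum_const, nsmul_eq_mul]
    _ ≤ ∑ p ∈ P, term (f p) := Finset.sum_le_sum hlow
    _ = ∑ q ∈ P.image f, term q := (Finset.sum_image hinj).symm
    _ ≤ ∑ q ∈ thtQuadruples N, term q := by
        apply Finset.sum_le_sum_of_subset_of_nonneg (Finset.image_subset_iff.mpr hmem)
        intro q _ _
        exact mul_nonneg (mul_nonneg (mul_nonneg (norm_nonneg _) (norm_nonneg _))
          (norm_nonneg _)) (norm_nonneg _)


/-- For `Fᵢ(x) = e^{2πiNx²}` (`i = 1,2,3`) and `F₄(x) = e^{−2πiNx²}`: (a) the sum of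
`∏ᵢ |F̂ᵢ(nᵢ)|` over the constrained quadruples with `|nᵢ| ≤ 2N` is at least `c`;
(b) `sup_n |F̂ᵢ(n)| ≤ C N^{-1/2}` for each `i`; consequently the sum in (a) is at least
`(c/C⁴) N² ∏ᵢ ‖F̂ᵢ‖_∞`, so it is not `O(maxᵢ ‖F̂ᵢ‖_∞)`. -/
theorem trilinear_fourier_counterexample :
    ∃ c C : ℝ, 0 < c ∧ 0 < C ∧ ∃ N₀ : ℕ, ∀ N : ℕ, N₀ ≤ N →
      (c ≤ ∑ q ∈ thtQuadruples N,
          ‖quadFourierCoeff (N : ℝ) q.1‖ * ‖quadFourierCoeff (N : ℝ) q.2.1‖ *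
            ‖quadFourierCoeff (N : ℝ) q.2.2.1‖ * ‖quadFourierCoeff (-(N : ℝ)) q.2.2.2‖) ∧
      (∀ n : ℤ, ‖quadFourierCoeff (N : ℝ) n‖ ≤ C * (N : ℝ) ^ (-(1/2) : ℝ) ∧
        ‖quadFourierCoeff (-(N : ℝ)) n‖ ≤ C * (N : ℝ) ^ (-(1/2) : ℝ)) ∧
      ((c / C ^ 4) * (N : ℝ) ^ 2 * (⨆ n : ℤ, ‖quadFourierCoeff (N : ℝ) n‖) ^ 3 *
          (⨆ n : ℤ, ‖quadFourierCoeff (-(N : ℝ)) n‖) ≤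
        ∑ q ∈ thtQuadruples N,
          ‖quadFourierCoeff (N : ℝ) q.1‖ * ‖quadFourierCoeff (N : ℝ) q.2.1‖ *
            ‖quadFourierCoeff (N : ℝ) q.2.2.1‖ * ‖quadFourierCoeff (-(N : ℝ)) q.2.2.2‖) := by
  refine ⟨1/10240000, 2, by norm_num, by norm_num, 64, fun N hN => ?_⟩
  have hN1 : 1 ≤ N := by omega
  have hN0 : (0:ℝ) < N := by
    have : (0:ℕ) < N := by omega
    exact_mod_cast this
  have hsum := sum_lower hN
  have hb : ∀ n : ℤ, ‖quadFourierCoeff (N : ℝ) n‖ ≤ 2 * (N : ℝ) ^ (-(1/2) : ℝ) ∧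
      ‖quadFourierCoeff (-(N : ℝ)) n‖ ≤ 2 * (N : ℝ) ^ (-(1/2) : ℝ) := by
    intro n
    refine ⟨quad_upper hN1 n, ?_⟩
    rw [quad_neg_norm]
    exact quad_upper hN1 (-n)
  refine ⟨hsum, hb, ?_⟩
  set s : ℝ := Real.sqrt N with hs
  have hs2 : s^2 = (N:ℝ) := Real.sq_sqrt hN0.le
  have hspos : 0 < s := Real.sqrt_pos.mpr hN0
  have hrw : (2:ℝ) * (N : ℝ) ^ (-(1/2) : ℝ) = 2 * s⁻¹ := by rw [sqrt_inv_rpow hN1]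
  have h1 : (⨆ n : ℤ, ‖quadFourierCoeff (N : ℝ) n‖) ≤ 2 * s⁻¹ := by
    apply Real.iSup_le (fun n => ?_) (by positivity)
    rw [← hrw]; exact (hb n).1
  have h2 : (⨆ n : ℤ, ‖quadFourierCoeff (-(N : ℝ)) n‖) ≤ 2 * s⁻¹ := by
    apply Real.iSup_le (fun n => ?_) (by positivity)
    rw [← hrw]; exact (hb n).2
  have h1nn : 0 ≤ (⨆ n : ℤ, ‖quadFourierCoeff (N : ℝ) n‖) :=
    Real.iSup_nonneg (fun n => norm_nonneg _)
  have h2nn : 0 ≤ (⨆ n : ℤ, ‖quadFourierCoeff (-(N : ℝ)) n‖) :=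
    Real.iSup_nonneg (fun n => norm_nonneg _)
  set c : ℝ := 1/10240000 with hc
  have hstep : (c / 2 ^ 4) * (N : ℝ) ^ 2 * (⨆ n : ℤ, ‖quadFourierCoeff (N : ℝ) n‖) ^ 3 *
      (⨆ n : ℤ, ‖quadFourierCoeff (-(N : ℝ)) n‖)
      ≤ (c / 2 ^ 4) * (N : ℝ) ^ 2 * (2 * s⁻¹) ^ 3 * (2 * s⁻¹) := by
    apply mul_le_mul _ h2 h2nn (by positivity)
    apply mul_le_mul_of_nonneg_left _ (by positivity)
    exact pow_le_pow_left₀ h1nn h1 3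
  have heq : (c / 2 ^ 4) * (N : ℝ) ^ 2 * (2 * s⁻¹) ^ 3 * (2 * s⁻¹) = c := by
    have h4 : (2 * s⁻¹) ^ 3 * (2 * s⁻¹) = 16 * (((s^2)^2))⁻¹ := by
      field_simp; ring
    calc (c / 2 ^ 4) * (N : ℝ) ^ 2 * (2 * s⁻¹) ^ 3 * (2 * s⁻¹)
        = (c / 16) * ((2 * s⁻¹) ^ 3 * (2 * s⁻¹)) * (N : ℝ) ^ 2 := by ring
      _ = (c / 16) * (16 * (((s^2)^2))⁻¹) * (N : ℝ) ^ 2 := by rw [h4]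
      _ = c * ((N:ℝ)^2 * ((N:ℝ)^2)⁻¹) := by rw [hs2]; ring
      _ = c := by rw [mul_inv_cancel₀ (by positivity), mul_one]
  calc (c / 2 ^ 4) * (N : ℝ) ^ 2 * (⨆ n : ℤ, ‖quadFourierCoeff (N : ℝ) n‖) ^ 3 *
      (⨆ n : ℤ, ‖quadFourierCoeff (-(N : ℝ)) n‖)
      ≤ (c / 2 ^ 4) * (N : ℝ) ^ 2 * (2 * s⁻¹) ^ 3 * (2 * s⁻¹) := hstep
    _ = c := heq
    _ ≤ _ := hsum
end

section
/- Let n ≥ 1 and 0 < θ < 1/2. There exists a constant C = C(n, θ) with the following property. Let I₁, …, I_n be finite sets, let a_i : I_i → [0, ∞) with M_i := max_{m ∈ I_i} a_i(m) ≤ 1 for each i, and let Λ ⊆ I₁ × … × I_n. Suppose that for all λ₁, …, λ_n > 0, |{ω ∈ Λ : a_i(ω_i) ≥ λ_i for all 1 ≤ i ≤ n}| ≤ ∏_{i=1}^{n} λ_i^{-2θ}. Then ∑_{ω ∈ Λ} ∏_{i=1}^{n} a_i(ω_i) ≤ C ∏_{i=1}^{n} M_i^{1−2θ}. -/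
private lemma ssl_factor_eq (θ M : ℝ) (hM : 0 < M) (k : ℕ) :
    (M / 2 ^ (k + 1)) ^ (-(2 * θ)) * (M / 2 ^ k)
      = M ^ (1 - 2 * θ) * ((2:ℝ) ^ (2 * θ) * ((2:ℝ) ^ (2 * θ - 1)) ^ k) := by
  have hL : (0:ℝ) < (M / 2 ^ (k + 1)) ^ (-(2 * θ)) * (M / 2 ^ k) := by positivity
  have hR : (0:ℝ) < M ^ (1 - 2 * θ) * ((2:ℝ) ^ (2 * θ) * ((2:ℝ) ^ (2 * θ - 1)) ^ k) := by
    positivity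
  apply Real.log_injOn_pos (Set.mem_Ioi.2 hL) (Set.mem_Ioi.2 hR)
  rw [Real.log_mul (by positivity) (by positivity),
    Real.log_mul (by positivity) (by positivity),
    Real.log_mul (by positivity) (by positivity),
    Real.log_rpow (by positivity), Real.log_rpow hM, Real.log_rpow two_pos,
    Real.log_pow, Real.log_rpow two_pos,
    Real.log_div hM.ne' (by positivity), Real.log_div hM.ne' (by positivity),
    Real.log_pow, Real.log_pow]
  push_cast
  ring

/-- Abstract single-scale summation lemma: if `0 < θ < 1/2`, the `aᵢ` take values in
`[0,1]`, and the level sets of `Λ` satisfy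
`#{ω ∈ Λ : aᵢ(ωᵢ) ≥ λᵢ ∀i} ≤ ∏ᵢ λᵢ^{-2θ}` for all `λᵢ > 0`, then
`∑_{ω ∈ Λ} ∏ᵢ aᵢ(ωᵢ) ≤ C ∏ᵢ Mᵢ^{1−2θ}` where `Mᵢ = max aᵢ`. -/
theorem single_scale_summation (n : ℕ) (hn : 1 ≤ n) (θ : ℝ) (hθ0 : 0 < θ) (hθ : θ < 1 / 2) :
    ∃ C : ℝ, 0 < C ∧
      ∀ (I : Fin n → Type) [∀ i, Fintype (I i)] (a : ∀ i, I i → ℝ),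
        (∀ i m, 0 ≤ a i m) → (∀ i m, a i m ≤ 1) →
        ∀ Λ : Finset (∀ i, I i),
          (∀ lam : Fin n → ℝ, (∀ i, 0 < lam i) →
            (Nat.card {ω : ∀ i, I i // ω ∈ Λ ∧ ∀ i, lam i ≤ a i (ω i)} : ℝ) ≤
              ∏ i, lam i ^ (-(2 * θ))) →
          ∑ ω ∈ Λ, ∏ i, a i (ω i) ≤ C * ∏ i, (⨆ m, a i m) ^ (1 - 2 * θ) := by
  classical
  set r : ℝ := (2:ℝ) ^ (2 * θ - 1) with hr_def
  have hr0 : 0 < r := Real.rpow_pos_of_pos two_pos _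
  have hr1 : r < 1 :=
    Real.rpow_lt_one_of_one_lt_of_neg one_lt_two (by linarith)
  set D : ℝ := (2:ℝ) ^ (2 * θ) * (1 - r)⁻¹ with hD_def
  have hD0 : 0 < D :=
    mul_pos (Real.rpow_pos_of_pos two_pos _) (inv_pos.2 (by linarith))
  refine ⟨D ^ n, pow_pos hD0 n, ?_⟩
  intro I _ a ha0 ha1 Λ hΛ
  set M : Fin n → ℝ := fun i => ⨆ m, a i m with hM_def
  have hbdd : ∀ i, BddAbove (Set.range (a i)) := fun i => (Set.finite_range _).bddAbove
  have hM0 : ∀ i, 0 ≤ M i := by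
    intro i
    rcases isEmpty_or_nonempty (I i) with h | h
    · simp [hM_def, Real.iSup_of_isEmpty]
    · exact le_trans (ha0 i (Classical.arbitrary _)) (le_ciSup (hbdd i) _)
  have hRHS0 : 0 ≤ D ^ n * ∏ i, M i ^ (1 - 2 * θ) := by
    apply mul_nonneg (pow_pos hD0 n).le
    exact Finset.prod_nonneg fun i _ => Real.rpow_nonneg (hM0 i) _
  set Λ' : Finset (∀ i, I i) := Λ.filter (fun ω => ∀ i, 0 < a i (ω i)) with hΛ'_def
  have hsum_eq : ∑ ω ∈ Λ', ∏ i, a i (ω i) = ∑ ω ∈ Λ, ∏ i, a i (ω i) := by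
    apply Finset.sum_filter_of_ne
    intro ω hω hne i
    by_contra hcon
    push_neg at hcon
    exact hne (Finset.prod_eq_zero (Finset.mem_univ i) (le_antisymm hcon (ha0 i (ω i))))
  rw [← hsum_eq]
  rcases Finset.eq_empty_or_nonempty Λ' with hE | ⟨ω₀, hω₀⟩
  · rw [hE, Finset.sum_empty]; exact hRHS0
  have hω₀Λ := Finset.mem_filter.1 hω₀
  have hMpos : ∀ i, 0 < M i :=
    fun i => lt_of_lt_of_le (hω₀Λ.2 i) (le_ciSup (hbdd i) _)
  have haM : ∀ i m, a i m ≤ M i := fun i m => le_ciSup (hbdd i) m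
  -- dyadic level function
  set g : (∀ i, I i) → Fin n → ℕ :=
    fun ω i => ⌊Real.logb 2 (M i / a i (ω i))⌋₊ with hg_def
  have hdy : ∀ ω ∈ Λ', ∀ i,
      a i (ω i) ≤ M i / 2 ^ (g ω i) ∧ M i / 2 ^ (g ω i + 1) < a i (ω i) := by
    intro ω hω i
    have hpos : 0 < a i (ω i) := (Finset.mem_filter.1 hω).2 i
    have hx : (0:ℝ) < M i / a i (ω i) := div_pos (hMpos i) hpos
    have hx1 : 1 ≤ M i / a i (ω i) := (one_le_div hpos).2 (haM i (ω i))
    have hlog0 : 0 ≤ Real.logb 2 (M i / a i (ω i)) := Real.logb_nonneg one_lt_two hx1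
    constructor
    · rw [le_div_iff₀ (by positivity)]
      have h2g : (2:ℝ) ^ (g ω i) ≤ M i / a i (ω i) := by
        rw [← Real.rpow_natCast]
        calc (2:ℝ) ^ ((g ω i : ℕ) : ℝ)
            ≤ (2:ℝ) ^ Real.logb 2 (M i / a i (ω i)) :=
              Real.rpow_le_rpow_of_exponent_le one_le_two (Nat.floor_le hlog0)
          _ = M i / a i (ω i) := Real.rpow_logb two_pos (by norm_num) hx
      calc a i (ω i) * 2 ^ (g ω i) ≤ a i (ω i) * (M i / a i (ω i)) := by
            exact mul_le_mul_of_nonneg_left h2g hpos.le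
        _ = M i := by field_simp
    · rw [div_lt_iff₀ (by positivity)]
      have h2g : M i / a i (ω i) < (2:ℝ) ^ (g ω i + 1) := by
        rw [← Real.rpow_natCast]
        calc M i / a i (ω i)
            = (2:ℝ) ^ Real.logb 2 (M i / a i (ω i)) :=
              (Real.rpow_logb two_pos (by norm_num) hx).symm
          _ < (2:ℝ) ^ (((g ω i + 1 : ℕ)) : ℝ) := by
              apply Real.rpow_lt_rpow_of_exponent_lt one_lt_two
              push_cast
              exact Nat.lt_floor_add_one _
      calc M i = a i (ω i) * (M i / a i (ω i)) := by field_simp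
        _ < a i (ω i) * 2 ^ (g ω i + 1) := by
            exact mul_lt_mul_of_pos_left h2g hpos
  -- per-fiber bound
  set S : Finset (Fin n → ℕ) := Λ'.image g with hS_def
  have hfiber : ∀ k ∈ S,
      ∑ ω ∈ Λ'.filter (fun ω => g ω = k), ∏ i, a i (ω i)
        ≤ (∏ i, M i ^ (1 - 2 * θ)) * ∏ i, ((2:ℝ) ^ (2 * θ) * r ^ (k i)) := by
    intro k hk
    set F := Λ'.filter (fun ω => g ω = k) with hF_def
    set lam : Fin n → ℝ := fun i => M i / 2 ^ (k i + 1) with hlam_def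
    have hlam : ∀ i, 0 < lam i := fun i => div_pos (hMpos i) (by positivity)
    have hcount : (F.card : ℝ) ≤ ∏ i, lam i ^ (-(2 * θ)) := by
      have hsub : F ⊆ Λ.filter (fun ω => ∀ i, lam i ≤ a i (ω i)) := by
        intro ω hω
        obtain ⟨hωΛ', hgk⟩ := Finset.mem_filter.1 hω
        refine Finset.mem_filter.2 ⟨(Finset.mem_filter.1 hωΛ').1, fun i => ?_⟩
        have := (hdy ω hωΛ' i).2
        rw [hgk] at this
        exact this.le
      have hcard : (Nat.card {ω : ∀ i, I i // ω ∈ Λ ∧ ∀ i, lam i ≤ a i (ω i)} : ℕ)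
          = (Λ.filter (fun ω => ∀ i, lam i ≤ a i (ω i))).card := by
        rw [Nat.card_eq_fintype_card, Fintype.card_subtype]
        congr 1
        ext ω
        simp [Finset.mem_filter]
      calc (F.card : ℝ) ≤ ((Λ.filter (fun ω => ∀ i, lam i ≤ a i (ω i))).card : ℝ) := by
            exact_mod_cast Finset.card_le_card hsub
        _ = (Nat.card {ω : ∀ i, I i // ω ∈ Λ ∧ ∀ i, lam i ≤ a i (ω i)} : ℝ) := by
            rw [hcard]
        _ ≤ ∏ i, lam i ^ (-(2 * θ)) := hΛ lam hlam
    have hterm : ∀ ω ∈ F, ∏ i, a i (ω i) ≤ ∏ i, M i / 2 ^ (k i) := by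
      intro ω hω
      obtain ⟨hωΛ', hgk⟩ := Finset.mem_filter.1 hω
      apply Finset.prod_le_prod (fun i _ => (ha0 i (ω i)))
      intro i _
      have := (hdy ω hωΛ' i).1
      rwa [hgk] at this
    calc ∑ ω ∈ F, ∏ i, a i (ω i)
        ≤ F.card • (∏ i, M i / 2 ^ (k i)) := Finset.sum_le_card_nsmul F _ _ hterm
      _ = (F.card : ℝ) * (∏ i, M i / 2 ^ (k i)) := by rw [nsmul_eq_mul]
      _ ≤ (∏ i, lam i ^ (-(2 * θ))) * (∏ i, M i / 2 ^ (k i)) := by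
          apply mul_le_mul_of_nonneg_right hcount
          exact Finset.prod_nonneg fun i _ => div_nonneg (hM0 i) (by positivity)
      _ = ∏ i, (lam i ^ (-(2 * θ)) * (M i / 2 ^ (k i))) := by
          rw [← Finset.prod_mul_distrib]
      _ = ∏ i, (M i ^ (1 - 2 * θ) * ((2:ℝ) ^ (2 * θ) * r ^ (k i))) := by
          exact Finset.prod_congr rfl fun i _ => ssl_factor_eq θ (M i) (hMpos i) (k i)
      _ = (∏ i, M i ^ (1 - 2 * θ)) * ∏ i, ((2:ℝ) ^ (2 * θ) * r ^ (k i)) :=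
          Finset.prod_mul_distrib
  -- choose N so that S ⊆ piFinset (range N)
  set N : ℕ := (S.sup fun k => Finset.univ.sup k) + 1 with hN_def
  have hSsub : S ⊆ Fintype.piFinset (fun _ : Fin n => Finset.range N) := by
    intro k hk
    rw [Fintype.mem_piFinset]
    intro i
    rw [Finset.mem_range, hN_def]
    have h1 : k i ≤ Finset.univ.sup k := Finset.le_sup (Finset.mem_univ i)
    have h2 : Finset.univ.sup k ≤ S.sup fun k => Finset.univ.sup k :=
      Finset.le_sup hk
    omega
  have hgeom : ∀ i : Fin n, ∑ j ∈ Finset.range N, (2:ℝ) ^ (2 * θ) * r ^ j ≤ D := by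
    intro i
    rw [← Finset.mul_sum, hD_def]
    apply mul_le_mul_of_nonneg_left _ (Real.rpow_nonneg (by norm_num) _)
    have := Summable.sum_le_tsum (Finset.range N) (fun j _ => pow_nonneg hr0.le j)
      (summable_geometric_of_lt_one hr0.le hr1)
    rwa [tsum_geometric_of_lt_one hr0.le hr1] at this
  calc ∑ ω ∈ Λ', ∏ i, a i (ω i)
      = ∑ k ∈ S, ∑ ω ∈ Λ'.filter (fun ω => g ω = k), ∏ i, a i (ω i) :=
        (Finset.sum_fiberwise_of_maps_to (fun ω hω => Finset.mem_image_of_mem g hω) _).symm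
    _ ≤ ∑ k ∈ S, (∏ i, M i ^ (1 - 2 * θ)) * ∏ i, ((2:ℝ) ^ (2 * θ) * r ^ (k i)) :=
        Finset.sum_le_sum hfiber
    _ = (∏ i, M i ^ (1 - 2 * θ)) * ∑ k ∈ S, ∏ i, ((2:ℝ) ^ (2 * θ) * r ^ (k i)) := by
        rw [Finset.mul_sum]
    _ ≤ (∏ i, M i ^ (1 - 2 * θ)) *
        ∑ k ∈ Fintype.piFinset (fun _ : Fin n => Finset.range N),
          ∏ i, ((2:ℝ) ^ (2 * θ) * r ^ (k i)) := by
        apply mul_le_mul_of_nonneg_left _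
          (Finset.prod_nonneg fun i _ => Real.rpow_nonneg (hM0 i) _)
        apply Finset.sum_le_sum_of_subset_of_nonneg hSsub
        intro k _ _
        exact Finset.prod_nonneg fun i _ => by positivity
    _ = (∏ i, M i ^ (1 - 2 * θ)) *
        ∏ i : Fin n, ∑ j ∈ Finset.range N, (2:ℝ) ^ (2 * θ) * r ^ j := by
        rw [Finset.prod_univ_sum]
    _ ≤ (∏ i, M i ^ (1 - 2 * θ)) * D ^ n := by
        apply mul_le_mul_of_nonneg_left _
          (Finset.prod_nonneg fun i _ => Real.rpow_nonneg (hM0 i) _)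
        calc ∏ i : Fin n, ∑ j ∈ Finset.range N, (2:ℝ) ^ (2 * θ) * r ^ j
            ≤ ∏ i : Fin n, D := by
              apply Finset.prod_le_prod
              · intro i _
                exact Finset.sum_nonneg fun j _ => by positivity
              · intro i _
                exact hgeom i
          _ = D ^ n := by rw [Finset.prod_const, Finset.card_univ, Fintype.card_fin]
    _ = D ^ n * ∏ i, M i ^ (1 - 2 * θ) := mul_comm _ _
end
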